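/- arXiv:2002.04735 — 8 statements merged into one kernel-verified Lean document; each statement's English description precedes it below -/
import Mathlib

section
/- Let q = 2^k for some integer k ≥ 1 and let 𝔽_q be the field with q elements. Then every element of SL(2, 𝔽_q) is conjugate within SL(2, 𝔽_q) to its own inverse; equivalently, every conjugacy class of SL(2, 𝔽_q) coincides with the real conjugacy class of its elements. -/
/-!
STATEMENT 5: Let `q = 2 ^ k` for some integer `k ≥ 1` and let `𝔽_q` be the field with `q`
elements. Then every element of `SL(2, 𝔽_q)` is conjugate within `SL(2, 𝔽_q)` to its own
inverse; equivalently, every conjugacy class of `SL(2, 𝔽_q)` coincides with the real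
conjugacy class of its elements. -/

theorem statement5 (F : Type) [Field F] [Fintype F] (k : ℕ) (hk : 1 ≤ k)
    (hcard : Fintype.card F = 2 ^ k) :
    ∀ g : Matrix.SpecialLinearGroup (Fin 2) F, IsConj g g⁻¹ := by
  -- The field has characteristic 2.
  have hchar : (2 : F) = 0 := by
    obtain ⟨p, hp⟩ := CharP.exists F
    haveI := hp
    have hprime : p.Prime := CharP.char_is_prime F p
    obtain ⟨n, _, hn⟩ := FiniteField.card F p
    have hdvd : p ∣ 2 ^ k := by
      rw [hcard] at hn
      exact hn ▸ dvd_pow_self p n.ne_zero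
    have hp2 : p = 2 :=
      (Nat.prime_dvd_prime_iff_eq hprime Nat.prime_two).mp (hprime.dvd_of_dvd_pow hdvd)
    rw [hp2] at hp
    exact_mod_cast (haveI := hp; CharP.cast_eq_zero F 2)
  -- Squaring is surjective (Frobenius).
  have hsq : ∀ x : F, ∃ y : F, y * y = x := by
    have hinj : Function.Injective (fun y : F => y * y) := by
      intro y z h
      simp only at h
      have h0 : (y - z) ^ 2 = 0 := by linear_combination h + (z ^ 2 - y * z) * hchar
      have := pow_eq_zero_iff (n := 2) (by norm_num) |>.mp h0
      exact sub_eq_zero.mp this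
    intro x
    exact Finite.injective_iff_surjective.mp hinj x
  intro g
  obtain ⟨a, b, c, d, hAe⟩ : ∃ a b c d, (↑g : Matrix (Fin 2) (Fin 2) F) = !![a, b; c, d] :=
    ⟨_, _, _, _, Matrix.eta_fin_two _⟩
  have hdet : a * d - b * c = 1 := by
    have := g.prop
    rwa [hAe, Matrix.det_fin_two_of] at this
  have key : ∀ m : Matrix (Fin 2) (Fin 2) F, m.det = 1 →
      m * (↑g : Matrix (Fin 2) (Fin 2) F) = (↑g⁻¹ : Matrix (Fin 2) (Fin 2) F) * m →
      IsConj g g⁻¹ := by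
    intro m hm hcomm
    rw [isConj_iff]
    refine ⟨⟨m, hm⟩, ?_⟩
    apply mul_inv_eq_iff_eq_mul.mpr
    exact Subtype.ext hcomm
  have hinv : (↑g⁻¹ : Matrix (Fin 2) (Fin 2) F) = !![d, -b; -c, a] := by
    rw [Matrix.SpecialLinearGroup.coe_inv, hAe, Matrix.adjugate_fin_two]
    simp
  by_cases hb : b = 0
  · by_cases hc : c = 0
    · refine key !![0, 1; 1, 0] (by simp [Matrix.det_fin_two_of]; linear_combination -hchar) ?_
      rw [hAe, hinv]
      ext i j
      fin_cases i <;> fin_cases j <;>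
        simp [Matrix.mul_apply, Fin.sum_univ_succ, hb, hc]
    · obtain ⟨z, hz⟩ : ∃ z, c * z = a + d := ⟨(a+d)*c⁻¹, by field_simp⟩
      refine key !![1, z; 0, 1] (by simp [Matrix.det_fin_two_of]) ?_
      rw [hAe, hinv]
      ext i j
      fin_cases i <;> fin_cases j <;>
        simp [Matrix.mul_apply, Fin.sum_univ_succ, hb] <;>
        first
        | ring1
        | linear_combination hz + a*hchar
        | linear_combination hz + d*hchar
        | linear_combination b*hchar
        | linear_combination c*hchar
  · by_cases hc : c = 0
    · obtain ⟨z, hz⟩ : ∃ z, b * z = a + d := ⟨(a+d)*b⁻¹, by field_simp⟩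
      refine key !![1, 0; z, 1] (by simp [Matrix.det_fin_two_of]) ?_
      rw [hAe, hinv]
      ext i j
      fin_cases i <;> fin_cases j <;>
        simp [Matrix.mul_apply, Fin.sum_univ_succ, hc] <;>
        first
        | ring1
        | linear_combination hz + a*hchar
        | linear_combination hz + d*hchar
        | linear_combination b*hchar
        | linear_combination c*hchar
    · obtain ⟨β, hβ⟩ := hsq (b * c⁻¹)
      have hβc : β * β * c = b := by field_simp at hβ; linear_combination hβ
      have hβ0 : β ≠ 0 := by
        intro h0; rw [h0] at hβc; simp at hβc; exact hb hβc.symm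
      obtain ⟨γ, hγ⟩ : ∃ γ, β * γ = 1 := ⟨β⁻¹, by field_simp⟩
      refine key !![0, β; γ, 0] (by simp [Matrix.det_fin_two_of]; linear_combination -hγ - hchar) ?_
      rw [hAe, hinv]
      ext i j
      fin_cases i <;> fin_cases j <;>
        simp [Matrix.mul_apply, Fin.sum_univ_succ] <;>
        first
        | ring1
        | linear_combination -γ*hβc + β*c*hγ + β*c*hchar
        | linear_combination b*hchar
        | linear_combination c*hchar
end

section
/- Let q be a prime power and let 𝔽_q be the field with q elements. The induction homomorphism Ind : R(SL(2, 𝔽_q)) → R(GL(2, 𝔽_q)) between the complex representation groups is injective if and only if q is a power of 2. -/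
/-!
STATEMENT 7: Let `q` be a prime power and let `𝔽_q` be the field with `q` elements. The
induction homomorphism `Ind : R(SL(2, 𝔽_q)) → R(GL(2, 𝔽_q))` between the complex
representation groups is injective if and only if `q` is a power of `2`.

Here `𝔽_q` is formalized as an arbitrary finite field `F` with `q = Fintype.card F` elements
(the cardinality of a finite field is automatically a prime power), `SL(2, F)` is regarded
as a subgroup of `GL(2, F)` via the range of the canonical embedding `toGL`, `R(K)` is
realized as the additive subgroup of `K → ℂ` generated by the characters of
finite-dimensional complex representations of `K` (the group of virtual characters), and
the induction homomorphism is given on characters by the Frobenius induced character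
formula. -/

open scoped Classical

/-- The Frobenius induction of class functions, as an additive homomorphism
`(H → ℂ) →+ (G → ℂ)`. On characters this is the induced character formula. -/
noncomputable def inductionHom {G : Type} [Group G] [Fintype G] (H : Subgroup G) :
    (↥H → ℂ) →+ (G → ℂ) where
  toFun f := fun g =>
    (Nat.card ↥H : ℂ)⁻¹ * ∑ x : G, if h : x⁻¹ * g * x ∈ H then f ⟨x⁻¹ * g * x, h⟩ else 0
  map_zero' := by
    funext g
    simp
  map_add' f₁ f₂ := by
    funext g
    simp only [Pi.add_apply]
    rw [← mul_add, ← Finset.sum_add_distrib]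
    congr 1
    refine Finset.sum_congr rfl fun x _ => ?_
    split
    · rfl
    · simp

/-- The complex representation group `R(K)` of a finite group `K`, realized as the group of
virtual characters: the additive subgroup of `K → ℂ` generated by the characters of
finite-dimensional complex representations of `K`. -/
noncomputable def complexRepGroup (K : Type) [Group K] : AddSubgroup (K → ℂ) :=
  AddSubgroup.closure {f : K → ℂ | ∃ V : FDRep ℂ K, f = V.character}

/-- `SL(2, F)` as a subgroup of `GL(2, F)`. -/
def SL2subgroup (F : Type) [CommRing F] : Subgroup (GL (Fin 2) F) :=
  (Matrix.SpecialLinearGroup.toGL (n := Fin 2) (R := F)).range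


theorem exists_conj_of_char_eq {K : Type} [Group K] [Fintype K] {x y : K}
    (h : ∀ V : FDRep ℂ K, V.character x = V.character y) :
    ∃ t : K, t * x * t⁻¹ = y := by
  by_contra hc
  push_neg at hc
  have hcy : ∀ t : K, t * y * t⁻¹ ≠ x := by
    intro t ht
    refine hc t⁻¹ ?_
    rw [← ht]; group
  haveI : NeZero ((Fintype.card K : ℂ)) := ⟨Nat.cast_ne_zero.2 Fintype.card_ne_zero⟩
  set A := MonoidAlgebra ℂ K with hA
  haveI : FiniteDimensional ℂ A :=
    Module.Finite.equiv ((Finsupp.linearEquivFunOnFinite ℂ ℂ K).symm.trans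
      (MonoidAlgebra.coeffLinearEquiv ℂ).symm)
  set b : A := (∑ t : K, MonoidAlgebra.single (t * x * t⁻¹) (1:ℂ))
      - ∑ t : K, MonoidAlgebra.single (t * y * t⁻¹) (1:ℂ) with hbdef
  -- b is central
  have key : ∀ (g z : K),
      MonoidAlgebra.single g (1:ℂ) * (∑ t : K, MonoidAlgebra.single (t * z * t⁻¹) (1:ℂ))
      = (∑ t : K, MonoidAlgebra.single (t * z * t⁻¹) (1:ℂ)) * MonoidAlgebra.single g 1 := by
    intro g z
    rw [Finset.mul_sum, Finset.sum_mul]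
    refine Fintype.sum_equiv (Equiv.mulLeft g) _ _ fun t => ?_
    simp only [MonoidAlgebra.single_mul_single, one_mul, mul_one, Equiv.coe_mulLeft]
    congr 1
    group
  have hsing : ∀ g : K, MonoidAlgebra.single g (1:ℂ) * b = b * MonoidAlgebra.single g (1:ℂ) := by
    intro g
    rw [hbdef, mul_sub, sub_mul, key g x, key g y]
  have hcen : ∀ a : A, a * b = b * a := by
    intro a
    induction a using MonoidAlgebra.induction_on with
    | of g => simpa [MonoidAlgebra.of_apply] using hsing g
    | add f g hf hg => rw [add_mul, mul_add, hf, hg]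
    | smul r f hf => rw [smul_mul_assoc, mul_smul_comm, hf]
  -- b annihilates every simple submodule of A
  have hkill : ∀ S : Submodule A A, IsSimpleModule A ↥S → ∀ m ∈ S, b * m = 0 := by
    intro S hS m hm
    haveI := hS
    haveI : Nontrivial ↥S := IsSimpleModule.nontrivial A ↥S
    haveI : FiniteDimensional ℂ ↥S :=
      FiniteDimensional.of_injective ((S.subtype).restrictScalars ℂ) Subtype.val_injective
    -- the ℂ-linear endomorphism of S given by left multiplication by b
    set φ : ↥S →ₗ[ℂ] ↥S :=
      { toFun := fun s => ⟨b * ↑s, by simpa [smul_eq_mul] using S.smul_mem b s.2⟩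
        map_add' := fun s t => by ext; simp [mul_add]
        map_smul' := fun c s => by ext; simp [Algebra.mul_smul_comm] } with hφdef
    obtain ⟨μ, hμ⟩ := Module.End.exists_eigenvalue φ
    obtain ⟨v, hv⟩ := hμ.exists_hasEigenvector
    -- eigenspace as an A-submodule
    set W : Submodule A A :=
      { carrier := {m | m ∈ S ∧ b * m = μ • m}
        add_mem' := fun ha hb' => ⟨S.add_mem ha.1 hb'.1, by rw [mul_add, ha.2, hb'.2, smul_add]⟩
        zero_mem' := ⟨S.zero_mem, by simp⟩
        smul_mem' := fun a m hm => ⟨S.smul_mem a hm.1, by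
          rw [smul_eq_mul, ← mul_assoc, ← hcen a, mul_assoc, hm.2, mul_smul_comm]⟩ } with hWdef
    have hWS : W ≤ S := fun m' hm' => hm'.1
    have hWne : W ≠ ⊥ := by
      intro h0
      have hvW : (↑v : A) ∈ W := by
        refine ⟨v.2, ?_⟩
        have := hv.1  -- φ v = μ • v  (HasEigenvector: v ∈ eigenspace ...)
        have h2 : φ v = μ • v := hv.apply_eq_smul
        have := congrArg Subtype.val h2
        exact this
      rw [h0] at hvW
      simp only [Submodule.mem_bot] at hvW
      exact hv.2 (by ext; simp [hvW])
    have hWeq : W = S := by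
      rcases lt_or_eq_of_le hWS with hlt | heq
      · exact absurd ((isSimpleModule_iff_isAtom.mp hS).2 W hlt) hWne
      · exact heq
    -- the representation of K on S by left multiplication
    set ρ : Representation ℂ K ↥S :=
      { toFun := fun g =>
          { toFun := fun s => ⟨MonoidAlgebra.single g (1:ℂ) * ↑s,
              by simpa [smul_eq_mul] using S.smul_mem (MonoidAlgebra.single g 1) s.2⟩
            map_add' := fun s t => by apply Subtype.ext; simp [mul_add]
            map_smul' := fun c s => by apply Subtype.ext; simp [Algebra.mul_smul_comm] }
        map_one' := LinearMap.ext fun s => Subtype.ext (show MonoidAlgebra.single (1:K) (1:ℂ) * ↑s = ↑s by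
          rw [← MonoidAlgebra.one_def, one_mul])
        map_mul' := fun g g' => LinearMap.ext fun s => Subtype.ext (show
            MonoidAlgebra.single (g * g') (1:ℂ) * ↑s
              = MonoidAlgebra.single g 1 * (MonoidAlgebra.single g' 1 * ↑s) by
          rw [← mul_assoc, MonoidAlgebra.single_mul_single, one_mul]) } with hρdef
    set V : FDRep ℂ K := FDRep.of ρ with hVdef
    have hchar : ∀ g : K, V.character g = LinearMap.trace ℂ ↥S (ρ g) := fun g => rfl
    -- φ as a sum of ρ's
    have hφsum : φ = (∑ t : K, ρ (t * x * t⁻¹)) - ∑ t : K, ρ (t * y * t⁻¹) := by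
      refine LinearMap.ext fun s => Subtype.ext ?_
      simp only [hφdef, LinearMap.coe_mk, AddHom.coe_mk, LinearMap.sub_apply,
        LinearMap.coe_sum, Finset.sum_apply, AddSubgroupClass.coe_sub,
        AddSubmonoidClass.coe_finset_sum, hρdef, MonoidHom.coe_mk, OneHom.coe_mk]
      rw [hbdef, sub_mul, Finset.sum_mul, Finset.sum_mul]
    have htr1 : LinearMap.trace ℂ ↥S φ = (Fintype.card K : ℂ) * (V.character x - V.character y) := by
      rw [hφsum]
      rw [map_sub (LinearMap.trace ℂ ↥S), map_sum (LinearMap.trace ℂ ↥S), map_sum (LinearMap.trace ℂ ↥S)]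
      have e1 : ∀ t : K, LinearMap.trace ℂ ↥S (ρ (t * x * t⁻¹)) = V.character x := by
        intro t
        rw [← hchar, FDRep.char_conj]
      have e2 : ∀ t : K, LinearMap.trace ℂ ↥S (ρ (t * y * t⁻¹)) = V.character y := by
        intro t
        rw [← hchar, FDRep.char_conj]
      simp only [e1, e2, Finset.sum_const, Finset.card_univ, nsmul_eq_mul]
      ring
    have htr0 : LinearMap.trace ℂ ↥S φ = 0 := by rw [htr1, h V]; ring
    -- φ is scalar μ
    have hφsc : φ = μ • (LinearMap.id : ↥S →ₗ[ℂ] ↥S) := by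
      refine LinearMap.ext fun s => Subtype.ext ?_
      have hsW : (↑s : A) ∈ W := hWeq.symm ▸ s.2
      simpa [hφdef] using hsW.2
    have hμ0 : μ = 0 := by
      have : LinearMap.trace ℂ ↥S φ = μ * (Module.finrank ℂ ↥S : ℂ) := by
        rw [hφsc, LinearMap.map_smul, LinearMap.trace_id, smul_eq_mul]
      rw [htr0] at this
      have hfr : (Module.finrank ℂ ↥S : ℂ) ≠ 0 :=
        Nat.cast_ne_zero.2 Module.finrank_pos.ne'
      rcases mul_eq_zero.mp this.symm with h' | h'
      · exact h'
      · exact absurd h' hfr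
    have hmW : m ∈ W := hWeq.symm ▸ hm
    rw [hmW.2, hμ0, zero_smul]
  -- hence b = 0
  have hb0 : b = 0 := by
    set L : A →ₗ[A] A :=
      { toFun := fun m => b * m
        map_add' := fun m n => mul_add b m n
        map_smul' := fun a m => by
          simp only [smul_eq_mul, RingHom.id_apply]
          rw [← mul_assoc, ← hcen a, mul_assoc] } with hLdef
    have htop : (⊤ : Submodule A A) ≤ LinearMap.ker L := by
      rw [← IsSemisimpleModule.sSup_simples_eq_top A A]
      refine sSup_le fun S hS m hm => LinearMap.mem_ker.2 (hkill S hS m hm)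
    have := LinearMap.mem_ker.1 (htop (Submodule.mem_top : (1:A) ∈ ⊤))
    simpa [hLdef] using this
  -- contradiction: the coefficient of b at x is nonzero
  have hx : b.coeff x = 0 := by rw [hb0]; rfl
  rw [hbdef, MonoidAlgebra.coeff_sub, Finsupp.sub_apply] at hx
  have h2 : ((∑ t : K, MonoidAlgebra.single (t * y * t⁻¹) (1:ℂ)) : MonoidAlgebra ℂ K).coeff x = 0 := by
    rw [MonoidAlgebra.coeff_sum, Finset.sum_apply']
    simp only [MonoidAlgebra.coeff_single]
    refine Finset.sum_eq_zero fun t _ => Finsupp.single_eq_of_ne' (hcy t)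
  have h1 : ((∑ t : K, MonoidAlgebra.single (t * x * t⁻¹) (1:ℂ)) : MonoidAlgebra ℂ K).coeff x
      = ((Finset.univ.filter fun t : K => t * x * t⁻¹ = x).card : ℂ) := by
    rw [MonoidAlgebra.coeff_sum, Finset.sum_apply']
    simp only [MonoidAlgebra.coeff_single]
    rw [Finset.sum_congr rfl fun t _ => (Finsupp.single_apply :
      (Finsupp.single (t * x * t⁻¹) (1:ℂ)) x = _)]
    rw [Finset.sum_boole]
  rw [h1, h2, sub_zero] at hx
  have hne : (Finset.univ.filter fun t : K => t * x * t⁻¹ = x).Nonempty :=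
    ⟨1, Finset.mem_filter.2 ⟨Finset.mem_univ 1, by group⟩⟩
  exact (Nat.cast_ne_zero (R := ℂ)).2 (Finset.card_ne_zero.2 hne) hx

theorem mem_SL2_iff {F : Type} [Field F] [Fintype F] [DecidableEq F] (x : GL (Fin 2) F) :
    x ∈ SL2subgroup F ↔ Matrix.det ((x : Matrix (Fin 2) (Fin 2) F)) = 1 := by
  constructor
  · rintro ⟨s, rfl⟩
    exact s.prop
  · intro h
    exact ⟨⟨(x : Matrix (Fin 2) (Fin 2) F), h⟩, Units.ext rfl⟩

theorem SL2_normal (F : Type) [Field F] [Fintype F] [DecidableEq F] : (SL2subgroup F).Normal := by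
  constructor
  intro n hn g
  rw [mem_SL2_iff] at hn ⊢
  have h1 : ((g * n * g⁻¹ : GL (Fin 2) F) : Matrix (Fin 2) (Fin 2) F)
      = (g : Matrix (Fin 2) (Fin 2) F) * (n : Matrix (Fin 2) (Fin 2) F)
        * ((g⁻¹ : GL (Fin 2) F) : Matrix (Fin 2) (Fin 2) F) := by
    rw [Units.val_mul, Units.val_mul]
  rw [h1, Matrix.det_mul, Matrix.det_mul, hn, mul_one, ← Matrix.det_mul, ← Units.val_mul,
    mul_inv_cancel, Units.val_one, Matrix.det_one]

theorem conj_mem_iff {G : Type} [Group G] {H : Subgroup G} (hN : H.Normal) (x g : G) :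
    x⁻¹ * g * x ∈ H ↔ g ∈ H := by
  constructor
  · intro hx
    have h := hN.conj_mem _ hx x
    have he : x * (x⁻¹ * g * x) * x⁻¹ = g := by group
    rwa [he] at h
  · intro hg
    have h := hN.conj_mem _ hg x⁻¹
    rwa [inv_inv] at h

theorem repGroup_classfun {K : Type} [Group K] {f : K → ℂ}
    (hf : f ∈ complexRepGroup K) (a b : K) : f (b * a * b⁻¹) = f a := by
  set P : AddSubgroup (K → ℂ) :=
    { carrier := {f : K → ℂ | ∀ a b : K, f (b * a * b⁻¹) = f a}
      add_mem' := fun hx hy a b => by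
        simp only [Pi.add_apply]; rw [hx a b, hy a b]
      zero_mem' := fun a b => rfl
      neg_mem' := fun hx a b => by
        simp only [Pi.neg_apply]; rw [hx a b] } with hP
  have hle : complexRepGroup K ≤ P := by
    rw [complexRepGroup]
    refine (AddSubgroup.closure_le P).2 ?_
    rintro f ⟨V, rfl⟩
    intro a b
    exact FDRep.char_conj V a b
  exact hle hf a b

/-- Conjugation by `σ` as a monoid hom of a normal subgroup. -/
def conjMonoidHom {G : Type} [Group G] (H : Subgroup G) (hN : H.Normal) (σ : G) :
    ↥H →* ↥H where
  toFun h := ⟨σ * ↑h * σ⁻¹, hN.conj_mem _ h.2 σ⟩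
  map_one' := Subtype.ext (by simp)
  map_mul' h k := Subtype.ext (by
    show σ * ↑(h * k) * σ⁻¹ = (σ * ↑h * σ⁻¹) * (σ * ↑k * σ⁻¹)
    rw [Subgroup.coe_mul]
    group)

theorem ind_conj {G : Type} [Group G] [Fintype G] (H : Subgroup G) (hN : H.Normal) (σ : G)
    (f : ↥H → ℂ) :
    inductionHom H (f ∘ conjMonoidHom H hN σ) = inductionHom H f := by
  funext g
  show (Nat.card ↥H : ℂ)⁻¹ * _ = (Nat.card ↥H : ℂ)⁻¹ * _
  congr 1
  refine Fintype.sum_equiv (Equiv.mulRight σ⁻¹) _ _ fun x => ?_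
  simp only [Equiv.coe_mulRight]
  have hiff : (x * σ⁻¹)⁻¹ * g * (x * σ⁻¹) ∈ H ↔ x⁻¹ * g * x ∈ H := by
    rw [conj_mem_iff hN, conj_mem_iff hN]
  by_cases hx : x⁻¹ * g * x ∈ H
  · rw [dif_pos hx]; refine Eq.trans ?_ (dif_pos (hiff.2 hx)).symm
    exact congrArg f (Subtype.ext (by
      show σ * (x⁻¹ * g * x) * σ⁻¹ = (x * σ⁻¹)⁻¹ * g * (x * σ⁻¹)
      group))
  · rw [dif_neg hx]; refine Eq.trans ?_ (dif_neg (fun h => hx (hiff.1 h))).symm; rfl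

theorem char_comp_conj {K : Type} [Group K] (φ : K →* K) {f : K → ℂ}
    (hf : f ∈ complexRepGroup K) : (f ∘ φ) ∈ complexRepGroup K := by
  induction hf using AddSubgroup.closure_induction with
  | mem f hfgen =>
    obtain ⟨V, rfl⟩ := hfgen
    exact AddSubgroup.subset_closure ⟨FDRep.of (V.ρ.comp φ), rfl⟩
  | zero => exact AddSubgroup.zero_mem _
  | add f g _ _ hf hg => exact AddSubgroup.add_mem _ hf hg
  | neg f _ hf => exact AddSubgroup.neg_mem _ hf

theorem statement7 (F : Type) [Field F] [Fintype F] [DecidableEq F] :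
    Function.Injective
        ((inductionHom (SL2subgroup F)).domRestrict (complexRepGroup ↥(SL2subgroup F))) ↔
      ∃ k : ℕ, Fintype.card F = 2 ^ k := by
  set G := GL (Fin 2) F with hG
  set H := SL2subgroup F with hH
  have hN : H.Normal := SL2_normal F
  constructor
  · -- injective → q is a power of 2
    intro hinj
    by_contra hq
    -- the characteristic is odd, so there is a nonsquare
    have hchar2 : ringChar F ≠ 2 := by
      intro h2
      haveI : CharP F 2 := h2 ▸ ringChar.charP F
      obtain ⟨n, hp, hcard⟩ := FiniteField.card F 2
      exact hq ⟨n, hcard⟩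
    obtain ⟨ε, hε⟩ := FiniteField.exists_nonsquare hchar2
    have hε0 : ε ≠ 0 := fun h => hε (h ▸ IsSquare.zero)
    -- σ = diag(ε, 1)
    have hdetσ : Matrix.det !![ε, 0; 0, (1:F)] ≠ 0 := by
      rw [Matrix.det_fin_two_of]
      simpa using hε0
    set σ : G := Matrix.GeneralLinearGroup.mkOfDetNeZero !![ε, 0; 0, (1:F)] hdetσ with hσ
    -- the unipotent elements u, u'
    set uM : Matrix (Fin 2) (Fin 2) F := !![1, 1; 0, 1] with huM
    set uM' : Matrix (Fin 2) (Fin 2) F := !![1, ε; 0, 1] with huM'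
    have hdetu : uM.det = 1 := by rw [huM, Matrix.det_fin_two_of]; ring
    have hdetu' : uM'.det = 1 := by rw [huM', Matrix.det_fin_two_of]; ring
    set uG : G := Matrix.GeneralLinearGroup.mkOfDetNeZero uM (by rw [hdetu]; exact one_ne_zero)
      with huG
    set uG' : G := Matrix.GeneralLinearGroup.mkOfDetNeZero uM' (by rw [hdetu']; exact one_ne_zero)
      with huG'
    have humem : uG ∈ H := (mem_SL2_iff uG).2 hdetu
    have humem' : uG' ∈ H := (mem_SL2_iff uG').2 hdetu'
    set u : ↥H := ⟨uG, humem⟩ with hu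
    set u' : ↥H := ⟨uG', humem'⟩ with hu'
    have hσval : ((σ : G) : Matrix (Fin 2) (Fin 2) F) = !![ε, 0; 0, (1:F)] := rfl
    have huval : ((uG : G) : Matrix (Fin 2) (Fin 2) F) = uM := rfl
    have huval' : ((uG' : G) : Matrix (Fin 2) (Fin 2) F) = uM' := rfl
    -- conjugation by σ sends u to u'
    have hσu : σ * uG = uG' * σ := by
      refine Units.ext ?_
      rw [Units.val_mul, Units.val_mul, hσval, huval, huval', huM, huM',
        Matrix.mul_fin_two, Matrix.mul_fin_two]
      norm_num
    have hconj : conjMonoidHom H hN σ u = u' := by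
      refine Subtype.ext ?_
      show σ * uG * σ⁻¹ = uG'
      rw [hσu, mul_inv_cancel_right]
    -- all virtual characters are invariant under conjugation by σ
    have hallchar : ∀ V : FDRep ℂ ↥H, V.character u = V.character u' := by
      intro V
      set χ := V.character with hχ
      have hχmem : χ ∈ complexRepGroup ↥H := AddSubgroup.subset_closure ⟨V, rfl⟩
      have hcmem : (χ ∘ conjMonoidHom H hN σ) ∈ complexRepGroup ↥H :=
        char_comp_conj _ hχmem
      have hdmem : χ - χ ∘ conjMonoidHom H hN σ ∈ complexRepGroup ↥H :=
        AddSubgroup.sub_mem _ hχmem hcmem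
      have hind0 : (inductionHom H).domRestrict (complexRepGroup ↥H) ⟨_, hdmem⟩ = 0 := by
        rw [AddMonoidHom.domRestrict_apply, map_sub, ind_conj H hN σ χ, sub_self]
      have hz := hinj (a₁ := ⟨_, hdmem⟩) (a₂ := 0) (by rw [hind0, map_zero])
      have hzero : χ - χ ∘ conjMonoidHom H hN σ = 0 := congrArg Subtype.val hz
      have hzu := congrFun hzero u
      simp only [Pi.sub_apply, Function.comp_apply, Pi.zero_apply, sub_eq_zero] at hzu
      rw [hconj] at hzu
      exact hzu
    -- hence u and u' are conjugate in H
    obtain ⟨t, ht⟩ := exists_conj_of_char_eq hallchar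
    -- derive a contradiction: ε must be a square
    apply hε
    have htG : (↑t : G) * uG = uG' * (↑t : G) := by
      have h0 : (↑t : G) * uG * (↑t : G)⁻¹ = uG' := by
        have h1 := congrArg (Subtype.val : ↥H → G) ht
        simpa using h1
      rw [← h0, inv_mul_cancel_right]
    set B : Matrix (Fin 2) (Fin 2) F := ((↑t : G) : Matrix (Fin 2) (Fin 2) F) with hB
    have hdetB : B.det = 1 := (mem_SL2_iff _).1 t.2
    have hBU : B * uM = uM' * B := by
      have := congrArg Units.val htG
      rw [Units.val_mul, Units.val_mul, huval, huval'] at this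
      exact this
    rw [Matrix.eta_fin_two B, huM, huM', Matrix.mul_fin_two, Matrix.mul_fin_two] at hBU
    have e11 := congrFun (congrFun hBU 1) 1
    have e01 := congrFun (congrFun hBU 0) 1
    simp at e11 e01
    -- e11 : B 1 0 * 1 + B 1 1 * 1 = 0 * B 0 1 + 1 * B 1 1, e01 : B 0 0 + B 0 1 = B 0 1 + ε * B 1 1
    have hB10 : B 1 0 = 0 := by linear_combination e11
    have hB00 : B 0 0 = ε * B 1 1 := by linear_combination e01
    rw [Matrix.det_fin_two, hB10, hB00] at hdetB
    -- hdetB : ε * B 1 1 * B 1 1 - B 0 1 * 0 = 1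
    have hd : ε * (B 1 1 * B 1 1) = 1 := by linear_combination hdetB
    have hB11 : B 1 1 ≠ 0 := by
      intro h0
      rw [h0, mul_zero, mul_zero] at hd
      exact zero_ne_one hd
    refine ⟨(B 1 1)⁻¹, ?_⟩
    field_simp
    linear_combination hd
  · -- q a power of 2 → injective
    intro hpow
    -- every element of F is a square
    have hsq : ∀ t : F, ∃ s : F, s * s = t := by
      obtain ⟨k, hk⟩ := hpow
      obtain ⟨n, hp, hcard⟩ := FiniteField.card F (ringChar F)
      have hdvd : ringChar F ∣ 2 ^ k := by
        rw [← hk, hcard]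
        exact dvd_pow_self _ n.ne_zero
      have h2 : ringChar F = 2 :=
        (Nat.prime_dvd_prime_iff_eq hp Nat.prime_two).1 (hp.dvd_of_dvd_pow hdvd)
      haveI : CharP F 2 := h2 ▸ ringChar.charP F
      have hinj : Function.Injective (fun x : F => x * x) := by
        intro a b hab
        rcases mul_self_eq_mul_self_iff.1 hab with h | h
        · exact h
        · rw [h, CharTwo.neg_eq]
      exact Finite.injective_iff_surjective.1 hinj
    rw [injective_iff_map_eq_zero]
    rintro ⟨f, hfmem⟩ hf0
    rw [AddMonoidHom.domRestrict_apply] at hf0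
    refine Subtype.ext (funext fun h => ?_)
    -- evaluate the induced function at h
    have hval := congrFun hf0 h.1
    simp only [Pi.zero_apply] at hval
    have hterm : ∀ x : G,
        (@dite ℂ (x⁻¹ * h.1 * x ∈ H) (Classical.propDecidable _)
          (fun hx => f ⟨x⁻¹ * h.1 * x, hx⟩) (fun _ => 0)) = f h := by
      intro x
      have hx : x⁻¹ * h.1 * x ∈ H := (conj_mem_iff hN x h.1).2 h.2
      rw [dif_pos hx]
      -- write x = z * y with z scalar and y ∈ H
      have hdx : Matrix.det ((x : Matrix (Fin 2) (Fin 2) F)) ≠ 0 := by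
        have hxx : Matrix.det ((x : Matrix (Fin 2) (Fin 2) F))
            * Matrix.det (((x⁻¹ : G) : Matrix (Fin 2) (Fin 2) F)) = 1 := by
          rw [← Matrix.det_mul, ← Units.val_mul, mul_inv_cancel, Units.val_one, Matrix.det_one]
        exact left_ne_zero_of_mul_eq_one hxx
      obtain ⟨s, hs⟩ := hsq (Matrix.det ((x : Matrix (Fin 2) (Fin 2) F)))
      have hs0 : s ≠ 0 := by
        intro h0
        rw [h0, mul_zero] at hs
        exact hdx hs.symm
      have hdets : Matrix.det (s • (1 : Matrix (Fin 2) (Fin 2) F)) = s * s := by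
        rw [Matrix.det_smul, Matrix.det_one, Fintype.card_fin, mul_one, sq]
      set z : G := Matrix.GeneralLinearGroup.mkOfDetNeZero (s • (1 : Matrix (Fin 2) (Fin 2) F))
        (by rw [hdets]; exact mul_ne_zero hs0 hs0) with hz
      have hzc : ∀ a : G, z * a = a * z := by
        intro a
        refine Units.ext ?_
        show (s • (1 : Matrix (Fin 2) (Fin 2) F)) * (a : Matrix (Fin 2) (Fin 2) F)
            = (a : Matrix (Fin 2) (Fin 2) F) * (s • 1)
        rw [Matrix.smul_mul, Matrix.mul_smul, one_mul, mul_one]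
      set y : G := z⁻¹ * x with hy
      have hymem : y ∈ H := by
        rw [mem_SL2_iff]
        have hyx : (z : Matrix (Fin 2) (Fin 2) F) * ((y : G) : Matrix (Fin 2) (Fin 2) F)
            = (x : Matrix (Fin 2) (Fin 2) F) := by
          rw [← Units.val_mul, hy, mul_inv_cancel_left]
        have := congrArg Matrix.det hyx
        rw [Matrix.det_mul] at this
        have hdz : Matrix.det ((z : Matrix (Fin 2) (Fin 2) F)) = s * s := hdets
        have h2 : Matrix.det ((z : Matrix (Fin 2) (Fin 2) F))
            * Matrix.det (((y : G) : Matrix (Fin 2) (Fin 2) F))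
            = Matrix.det ((z : Matrix (Fin 2) (Fin 2) F)) * 1 := by
          rw [mul_one, this, hdz, ← hs]
        exact mul_left_cancel₀ (by rw [hdz]; exact mul_ne_zero hs0 hs0) h2
      have hxy : x⁻¹ * h.1 * x = y⁻¹ * h.1 * y := by
        have hcm : z * h.1 * z⁻¹ = h.1 := by
          rw [hzc h.1, mul_assoc, mul_inv_cancel, mul_one]
        rw [hy]
        have he2 : (z⁻¹ * x)⁻¹ * h.1 * (z⁻¹ * x) = x⁻¹ * (z * h.1 * z⁻¹) * x := by
          simp only [mul_inv_rev, inv_inv, mul_assoc]; rfl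
        rw [he2, hcm]
      have hmk : (⟨x⁻¹ * h.1 * x, hx⟩ : ↥H) = (⟨y, hymem⟩ : ↥H)⁻¹ * h * (⟨y, hymem⟩ : ↥H) := by
        refine Subtype.ext ?_
        show x⁻¹ * h.1 * x = ((⟨y, hymem⟩ : ↥H)⁻¹ * h * (⟨y, hymem⟩ : ↥H) : ↥H).1
        rw [hxy]
        rfl
      rw [hmk]
      have hcf := repGroup_classfun hfmem ((⟨y, hymem⟩ : ↥H)⁻¹ * h * (⟨y, hymem⟩ : ↥H))
        (⟨y, hymem⟩ : ↥H)
      have heq : (⟨y, hymem⟩ : ↥H) * ((⟨y, hymem⟩ : ↥H)⁻¹ * h * (⟨y, hymem⟩ : ↥H))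
          * (⟨y, hymem⟩ : ↥H)⁻¹ = h := by group
      rw [heq] at hcf
      exact hcf.symm
    -- so the sum is |G| • f h
    have hsum : ∑ x : G, (@dite ℂ (x⁻¹ * h.1 * x ∈ H) (Classical.propDecidable _)
          (fun hx => f ⟨x⁻¹ * h.1 * x, hx⟩) (fun _ => 0))
        = (Fintype.card G : ℂ) * f h := by
      rw [Finset.sum_congr rfl fun x _ => hterm x, Finset.sum_const, Finset.card_univ,
        nsmul_eq_mul]
    have hEq : (inductionHom H f) h.1 = (Nat.card ↥H : ℂ)⁻¹
        * ∑ x : G, (@dite ℂ (x⁻¹ * h.1 * x ∈ H) (Classical.propDecidable _)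
          (fun hx => f ⟨x⁻¹ * h.1 * x, hx⟩) (fun _ => 0)) := rfl
    rw [hEq, hsum] at hval
    have h1 : ((Nat.card ↥H : ℂ))⁻¹ ≠ 0 := inv_ne_zero (Nat.cast_ne_zero.2 Nat.card_pos.ne')
    have h2 : ((Fintype.card G : ℂ)) ≠ 0 := Nat.cast_ne_zero.2 Fintype.card_ne_zero
    rcases mul_eq_zero.1 hval with h' | h'
    · exact absurd h' h1
    rcases mul_eq_zero.1 h' with h'' | h''
    · exact absurd h'' h2
    exact h''
end

section
/- Let q be a prime power with q ≡ 3 (mod 4) and let 𝔽_q be the field with q elements. Then for every n ∈ SL(2, 𝔽_q), the set of elements of SL(2, 𝔽_q) that are conjugate in GL(2, 𝔽_q) to n or to n^{-1} equals the set of elements of SL(2, 𝔽_q) that are conjugate in SL(2, 𝔽_q) to n or to n^{-1}; that is, (n)^±_{GL(2,𝔽_q)} ∩ SL(2, 𝔽_q) = (n)^±_{SL(2,𝔽_q)}. -/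
/-!
STATEMENT 10: Let `q` be a prime power with `q ≡ 3 (mod 4)` and let `𝔽_q` be the field with
`q` elements. Then for every `n ∈ SL(2, 𝔽_q)`, the set of elements of `SL(2, 𝔽_q)` that are
conjugate in `GL(2, 𝔽_q)` to `n` or to `n⁻¹` equals the set of elements of `SL(2, 𝔽_q)` that
are conjugate in `SL(2, 𝔽_q)` to `n` or to `n⁻¹`; that is,
`(n)^±_{GL(2,𝔽_q)} ∩ SL(2, 𝔽_q) = (n)^±_{SL(2,𝔽_q)}`. -/

open Matrix

/-- Every element of `SL(2,F)` is conjugated to its inverse by a matrix of determinant `-1`. -/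
private lemma exists_det_neg_one_semiconj {F : Type} [Field F]
    (n : Matrix.SpecialLinearGroup (Fin 2) F) :
    ∃ w : Matrix (Fin 2) (Fin 2) F, w.det = -1 ∧
      w * (n : Matrix (Fin 2) (Fin 2) F) = (↑(n⁻¹) : Matrix (Fin 2) (Fin 2) F) * w := by
  obtain ⟨a, b, c, d, hn⟩ : ∃ a b c d, (n : Matrix (Fin 2) (Fin 2) F) = !![a, b; c, d] :=
    ⟨_, _, _, _, (Matrix.eta_fin_two _)⟩
  have hinv : (↑(n⁻¹) : Matrix (Fin 2) (Fin 2) F) = !![d, -b; -c, a] := by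
    rw [Matrix.SpecialLinearGroup.coe_inv, hn, Matrix.adjugate_fin_two]
    simp
  have gen : ∀ x y z : F, (a - d) * x + c * y + b * z = 0 →
      !![x, y; z, -x] * (n : Matrix (Fin 2) (Fin 2) F)
        = (↑(n⁻¹) : Matrix (Fin 2) (Fin 2) F) * !![x, y; z, -x] := by
    intro x y z h
    rw [hn, hinv]
    ext i j
    fin_cases i <;> fin_cases j <;>
      simp [Matrix.mul_apply, Fin.sum_univ_two] <;> (first | ring1 | linear_combination h)
  by_cases hc0 : c ≠ 0
  · refine ⟨!![1, -(a - d) / c; 0, -1], by simp [Matrix.det_fin_two_of], gen 1 (-(a - d) / c) 0 ?_⟩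
    field_simp
    ring
  · push_neg at hc0
    by_cases hb0 : b ≠ 0
    · refine ⟨!![1, 0; -(a - d) / b, -1], by simp [Matrix.det_fin_two_of],
        gen 1 0 (-(a - d) / b) ?_⟩
      field_simp
      ring
    · push_neg at hb0
      by_cases had : a = d
      · exact ⟨!![1, 0; 0, -1], by simp [Matrix.det_fin_two_of],
          gen 1 0 0 (by rw [had, hc0, hb0]; ring)⟩
      · exact ⟨!![0, 1; 1, -0], by simp [Matrix.det_fin_two_of],
          gen 0 1 1 (by rw [hc0, hb0]; ring)⟩

/-- If two elements of `SL(2,F)` are conjugate by a matrix whose determinant is a nonzero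
square, then they are conjugate in `SL(2,F)`. -/
private lemma isConj_of_sq_det {F : Type} [Field F]
    (n x : Matrix.SpecialLinearGroup (Fin 2) F) (g : Matrix (Fin 2) (Fin 2) F)
    (hg : g * (n : Matrix (Fin 2) (Fin 2) F) = (x : Matrix (Fin 2) (Fin 2) F) * g)
    (h0 : g.det ≠ 0) (hs : IsSquare g.det) : IsConj n x := by
  obtain ⟨s, hsq⟩ := hs
  have hs0 : s ≠ 0 := by
    rintro rfl
    rw [mul_zero] at hsq
    exact h0 hsq
  have hdet : (s⁻¹ • g).det = 1 := by
    rw [Matrix.det_smul, hsq]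
    simp only [Fintype.card_fin]
    field_simp
  rw [isConj_iff]
  refine ⟨@id (Matrix.SpecialLinearGroup (Fin 2) F) ⟨s⁻¹ • g, hdet⟩, ?_⟩
  rw [mul_inv_eq_iff_eq_mul]
  refine Subtype.ext ?_
  show (s⁻¹ • g) * (n : Matrix (Fin 2) (Fin 2) F) = (x : Matrix (Fin 2) (Fin 2) F) * (s⁻¹ • g)
  rw [smul_mul_assoc, hg, mul_smul_comm]

/-- In a finite field, the product of two nonsquares is a square. -/
private lemma isSquare_mul_of_not_isSquare {F : Type} [Field F] [Fintype F]
    {a b : F} (ha : ¬IsSquare a) (hb : ¬IsSquare b) : IsSquare (a * b) := by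
  classical
  have ha0 : a ≠ 0 := fun h => ha (h ▸ ⟨0, by simp⟩)
  have hb0 : b ≠ 0 := fun h => hb (h ▸ ⟨0, by simp⟩)
  have h1 : quadraticChar F a = -1 := quadraticChar_neg_one_iff_not_isSquare.mpr ha
  have h2 : quadraticChar F b = -1 := quadraticChar_neg_one_iff_not_isSquare.mpr hb
  have hm : quadraticChar F (a * b) = 1 := by
    rw [_root_.map_mul, h1, h2]; ring
  exact (quadraticChar_one_iff_isSquare (mul_ne_zero ha0 hb0)).mp hm

/-- Key step: if two elements of `SL(2,F)` (with `|F| ≡ 3 mod 4`) are conjugate by an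
invertible matrix, then in `SL(2,F)` the second is conjugate to the first or its inverse. -/
private lemma key_lemma {F : Type} [Field F] [Fintype F] (hq : Fintype.card F % 4 = 3)
    (n x : Matrix.SpecialLinearGroup (Fin 2) F) (g : Matrix (Fin 2) (Fin 2) F)
    (hg : g * (n : Matrix (Fin 2) (Fin 2) F) = (x : Matrix (Fin 2) (Fin 2) F) * g)
    (h0 : g.det ≠ 0) : IsConj n x ∨ IsConj n⁻¹ x := by
  by_cases hs : IsSquare g.det
  · exact Or.inl (isConj_of_sq_det n x g hg h0 hs)
  · right
    obtain ⟨w, hw1, hw2⟩ := exists_det_neg_one_semiconj n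
    have hnn : (n : Matrix (Fin 2) (Fin 2) F) * (↑(n⁻¹) : Matrix (Fin 2) (Fin 2) F) = 1 := by
      rw [← Matrix.SpecialLinearGroup.coe_mul, mul_inv_cancel,
        Matrix.SpecialLinearGroup.coe_one]
    have key : (n : Matrix (Fin 2) (Fin 2) F) * w = w * (↑(n⁻¹) : Matrix (Fin 2) (Fin 2) F) := by
      calc (n : Matrix (Fin 2) (Fin 2) F) * w
          = ↑n * (w * (↑n * ↑(n⁻¹))) := by rw [hnn, mul_one]
        _ = ↑n * ((w * ↑n) * ↑(n⁻¹)) := by rw [mul_assoc]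
        _ = ↑n * ((↑(n⁻¹) * w) * ↑(n⁻¹)) := by rw [hw2]
        _ = (↑n * ↑(n⁻¹)) * (w * ↑(n⁻¹)) := by simp only [mul_assoc]
        _ = w * ↑(n⁻¹) := by rw [hnn, one_mul]
    have hneg : ¬IsSquare (-1 : F) := by
      rw [FiniteField.isSquare_neg_one_iff]
      simp [hq]
    refine isConj_of_sq_det n⁻¹ x (g * w) ?_ ?_ ?_
    · rw [mul_assoc, ← key, ← mul_assoc, hg, mul_assoc]
    · rw [Matrix.det_mul, hw1]
      exact mul_ne_zero h0 (by norm_num)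
    · rw [Matrix.det_mul, hw1]
      exact isSquare_mul_of_not_isSquare hs hneg

theorem statement10 (F : Type) [Field F] [Fintype F] (hq : Fintype.card F % 4 = 3) :
    ∀ n x : Matrix.SpecialLinearGroup (Fin 2) F,
      (IsConj (Matrix.SpecialLinearGroup.toGL n) (Matrix.SpecialLinearGroup.toGL x) ∨
        IsConj (Matrix.SpecialLinearGroup.toGL n⁻¹) (Matrix.SpecialLinearGroup.toGL x)) ↔
      (IsConj n x ∨ IsConj n⁻¹ x) := by
  intro n x
  have extract : ∀ m : Matrix.SpecialLinearGroup (Fin 2) F,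
      IsConj (Matrix.SpecialLinearGroup.toGL m) (Matrix.SpecialLinearGroup.toGL x) →
      IsConj m x ∨ IsConj m⁻¹ x := by
    intro m h
    obtain ⟨u, hu⟩ := isConj_iff.mp h
    rw [mul_inv_eq_iff_eq_mul] at hu
    have hm : (↑u : Matrix (Fin 2) (Fin 2) F) * (m : Matrix (Fin 2) (Fin 2) F)
        = (x : Matrix (Fin 2) (Fin 2) F) * (↑u : Matrix (Fin 2) (Fin 2) F) := by
      have h2 := congrArg Units.val hu
      simpa [Units.val_mul, Matrix.SpecialLinearGroup.toGL] using h2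
    have h0 : ((u : Matrix (Fin 2) (Fin 2) F)).det ≠ 0 :=
      ((Matrix.isUnit_iff_isUnit_det _).mp u.isUnit).ne_zero
    exact key_lemma hq m x (↑u) hm h0
  constructor
  · rintro (h | h)
    · exact extract n h
    · have := extract n⁻¹ h
      rw [inv_inv] at this
      exact this.symm
  · rintro (h | h)
    · exact Or.inl (Matrix.SpecialLinearGroup.toGL.map_isConj h)
    · exact Or.inr (Matrix.SpecialLinearGroup.toGL.map_isConj h)
end

section
/- Let G be a finite group and N a normal subgroup of G such that for every n ∈ N the real conjugacy class of n in G intersected with N equals the real conjugacy class of n in N, i.e., (n)^±_G ∩ N = (n)^±_N. Let V be a finite-dimensional real representation of N with character χ_V, and let χ_W be the character of the induced representation W = Ind_N^G(V). Then χ_W(g) = 0 for every g ∈ G not lying in N, and χ_W(g) = [G : N] · χ_V(g) for every g ∈ N. -/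
/-!
STATEMENT 11: Let `G` be a finite group and `N` a normal subgroup of `G` such that for
every `n ∈ N` the real conjugacy class of `n` in `G` intersected with `N` equals the real
conjugacy class of `n` in `N`, i.e. `(n)^±_G ∩ N = (n)^±_N`. Let `V` be a finite-dimensional
real representation of `N` with character `χ_V`, and let `χ_W` be the character of the
induced representation `W = Ind_N^G(V)`. Then `χ_W(g) = 0` for every `g ∈ G` not lying in
`N`, and `χ_W(g) = [G : N] · χ_V(g)` for every `g ∈ N`.

The induced representation is realized concretely: `Ind_N^G(V)` is the space of functions
`f : G → V` with `f (n * x) = ρ n (f x)` for `n ∈ N`, on which `G` acts by right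
translation; its character at `g` is the trace of the action of `g`. -/

variable {G : Type} [Group G]

/-- The carrier of the induced representation `Ind_H^G V`: the space of functions
`f : G → V` satisfying `f (h * x) = ρ h (f x)` for all `h ∈ H`, `x ∈ G`. -/
def indCarrier (H : Subgroup G) {V : Type} [AddCommGroup V] [Module ℝ V]
    (ρ : Representation ℝ ↥H V) : Submodule ℝ (G → V) where
  carrier := {f | ∀ (h : ↥H) (x : G), f ((h : G) * x) = ρ h (f x)}
  add_mem' := by
    intro a b ha hb h x
    simp only [Pi.add_apply, ha h x, hb h x, map_add]
  zero_mem' := by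
    intro h x
    simp
  smul_mem' := by
    intro c a ha h x
    simp only [Pi.smul_apply, ha h x, map_smul]

/-- The induced representation `Ind_H^G V` of a real representation `ρ` of `H ≤ G`:
`G` acts on `indCarrier H ρ` by right translation. -/
noncomputable def indRep (H : Subgroup G) {V : Type} [AddCommGroup V] [Module ℝ V]
    (ρ : Representation ℝ ↥H V) : Representation ℝ G ↥(indCarrier H ρ) where
  toFun g := (LinearMap.funLeft ℝ V (fun x => x * g)).restrict
    (p := indCarrier H ρ) (q := indCarrier H ρ)
    (fun f hf h x => by
      simpa [LinearMap.funLeft_apply, mul_assoc] using hf h (x * g))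
  map_one' := by
    apply LinearMap.ext
    intro f
    apply Subtype.ext
    funext x
    simp [LinearMap.restrict_apply, LinearMap.funLeft_apply]
  map_mul' g g' := by
    apply LinearMap.ext
    intro f
    apply Subtype.ext
    funext x
    show (f : G → V) (x * (g * g')) = (f : G → V) (x * g * g')
    rw [mul_assoc]

/-- The submodule of vectors fixed by every element of a subgroup `K`. -/
def fixedSubmodule {V : Type} [AddCommGroup V] [Module ℝ V]
    (ρ : Representation ℝ G V) (K : Subgroup G) : Submodule ℝ V where
  carrier := {v | ∀ g ∈ K, ρ g v = v}
  add_mem' := by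
    intro a b ha hb g hg
    simp [map_add, ha g hg, hb g hg]
  zero_mem' := by
    intro g hg
    simp
  smul_mem' := by
    intro c v hv g hg
    simp [map_smul, hv g hg]

/-- The real dimension of the subspace of `K`-fixed vectors. -/
noncomputable def fixedDim {V : Type} [AddCommGroup V] [Module ℝ V]
    (ρ : Representation ℝ G V) (K : Subgroup G) : ℕ :=
  Module.finrank ℝ ↥(fixedSubmodule ρ K)

open LinearMap Matrix in
private lemma trace_rho_inv {H : Type*} [Group H] [Finite H]
    {V : Type} [AddCommGroup V] [Module ℝ V] [FiniteDimensional ℝ V]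
    (ρ : Representation ℝ H V) (g : H) :
    trace ℝ V (ρ g⁻¹) = trace ℝ V (ρ g) := by
  classical
  cases nonempty_fintype H
  let b := Module.finBasis ℝ V
  set M : H → Matrix _ _ ℝ := fun h => LinearMap.toMatrix b b (ρ h) with hMdef
  have hmul : ∀ h h' : H, M (h * h') = M h * M h' := by
    intro h h'; simp only [hMdef, _root_.map_mul, LinearMap.toMatrix_mul]
  have hone : M 1 = 1 := by simp only [hMdef, _root_.map_one, LinearMap.toMatrix_one]
  set B : Matrix _ _ ℝ := ∑ h : H, (M h)ᴴ * M h with hBdef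
  have hBpos : B.PosDef := by
    have hsplit : B = (M 1)ᴴ * M 1 + ∑ h ∈ Finset.univ.erase 1, (M h)ᴴ * M h := by
      rw [hBdef, ← Finset.add_sum_erase _ _ (Finset.mem_univ 1)]
    rw [hsplit, hone]
    refine Matrix.PosDef.add_posSemidef (by simpa using (Matrix.PosDef.one)) ?_
    exact Finset.sum_induction _ _ (fun a b ha hb => ha.add hb) Matrix.PosSemidef.zero
      (fun h _ => Matrix.posSemidef_conjTranspose_mul_self (M h))
  have key : (M g)ᴴ * B * M g = B := by
    rw [hBdef, Finset.mul_sum, Finset.sum_mul]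
    rw [← Equiv.sum_comp (Equiv.mulRight g) (fun h => (M h)ᴴ * M h)]
    refine Finset.sum_congr rfl fun h _ => ?_
    simp only [Equiv.coe_mulRight, hmul, conjTranspose_mul]
    noncomm_ring
  have hMg1 : M g * M g⁻¹ = 1 := by rw [← hmul, mul_inv_cancel, hone]
  have hdetB : IsUnit B.det := (Matrix.isUnit_iff_isUnit_det B).1 hBpos.isUnit
  have h1 : (M g)ᴴ * B = B * M g⁻¹ := by
    calc (M g)ᴴ * B = (M g)ᴴ * B * (M g * M g⁻¹) := by rw [hMg1, Matrix.mul_one]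
    _ = ((M g)ᴴ * B * M g) * M g⁻¹ := by noncomm_ring
    _ = B * M g⁻¹ := by rw [key]
  have h2 : M g⁻¹ = B⁻¹ * ((M g)ᴴ * B) := by
    rw [h1, ← Matrix.mul_assoc, Matrix.nonsing_inv_mul B hdetB, Matrix.one_mul]
  have := congrArg Matrix.trace h2
  rw [Matrix.trace_mul_comm, Matrix.mul_assoc, Matrix.mul_nonsing_inv B hdetB,
    Matrix.mul_one, Matrix.trace_conjTranspose] at this
  rw [trace_eq_matrix_trace ℝ b, trace_eq_matrix_trace ℝ b]
  simpa using this

open LinearMap in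
private lemma trace_rho_conj {H : Type*} [Group H]
    {V : Type} [AddCommGroup V] [Module ℝ V]
    (ρ : Representation ℝ H V) {x y : H} (h : IsConj x y) :
    trace ℝ V (ρ y) = trace ℝ V (ρ x) := by
  obtain ⟨c, hc⟩ := isConj_iff.1 h
  rw [← hc, _root_.map_mul, LinearMap.trace_mul_comm, ← _root_.map_mul, inv_mul_cancel_left]

theorem statement11 {G : Type} [Group G] [Fintype G] (N : Subgroup G) [N.Normal]
    (hreal : ∀ n x : ↥N,
      (IsConj (n : G) (x : G) ∨ IsConj ((n : G))⁻¹ (x : G)) ↔ (IsConj n x ∨ IsConj n⁻¹ x))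
    {V : Type} [AddCommGroup V] [Module ℝ V] [FiniteDimensional ℝ V]
    (ρ : Representation ℝ ↥N V) :
    (∀ g : G, g ∉ N → LinearMap.trace ℝ ↥(indCarrier N ρ) (indRep N ρ g) = 0) ∧
    (∀ (g : G) (hg : g ∈ N),
        LinearMap.trace ℝ ↥(indCarrier N ρ) (indRep N ρ g) =
          (N.index : ℝ) * LinearMap.trace ℝ V (ρ ⟨g, hg⟩)) := by
  classical
  letI sd : Setoid G := QuotientGroup.rightRel N
  let Q := Quotient sd
  haveI : Fintype Q := QuotientGroup.fintypeQuotientRightRel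
  -- membership fact for the "N-part" of x
  have hmem : ∀ x : G, x * (Quotient.out (⟦x⟧ : Q))⁻¹ ∈ N := by
    intro x
    exact QuotientGroup.rightRel_apply.mp (Quotient.mk_out x)
  let ν : G → ↥N := fun x => ⟨x * (Quotient.out (⟦x⟧ : Q))⁻¹, hmem x⟩
  have hν : ∀ x : G, ((ν x : G)) * Quotient.out (⟦x⟧ : Q) = x := by
    intro x; simp [ν]
  -- class facts
  have hmk_mul : ∀ (h : ↥N) (x : G), (⟦(h : G) * x⟧ : Q) = ⟦x⟧ := by
    intro h x
    refine Quotient.sound (QuotientGroup.rightRel_apply.mpr ?_)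
    have : x * ((h : G) * x)⁻¹ = (h : G)⁻¹ := by group
    rw [this]; exact N.inv_mem h.2
  have hν_mul : ∀ (h : ↥N) (x : G), ν ((h : G) * x) = h * ν x := by
    intro h x
    apply Subtype.ext
    show ((h : G) * x) * (Quotient.out (⟦(h:G)*x⟧ : Q))⁻¹ = (h : G) * (x * (Quotient.out (⟦x⟧ : Q))⁻¹)
    rw [hmk_mul h x, mul_assoc]
  -- the linear equivalence with Q → V
  let e : ↥(indCarrier N ρ) ≃ₗ[ℝ] (Q → V) :=
    { toFun := fun f q => f.1 q.out
      map_add' := fun f g => rfl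
      map_smul' := fun c f => rfl
      invFun := fun φ => ⟨fun x => ρ (ν x) (φ ⟦x⟧), by
        intro h x
        show ρ (ν ((h : G) * x)) (φ ⟦(h:G)*x⟧) = ρ h (ρ (ν x) (φ ⟦x⟧))
        rw [hmk_mul h x, hν_mul h x, _root_.map_mul]
        rfl⟩
      left_inv := by
        intro f
        apply Subtype.ext
        funext x
        show ρ (ν x) (f.1 (Quotient.out (⟦x⟧ : Q))) = f.1 x
        rw [← f.2 (ν x) (Quotient.out (⟦x⟧ : Q)), hν x]
      right_inv := by
        intro φ
        funext q
        show ρ (ν q.out) (φ ⟦q.out⟧) = φ q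
        have h1 : (⟦q.out⟧ : Q) = q := Quotient.out_eq q
        have h2 : ν q.out = 1 := by
          apply Subtype.ext
          show q.out * (Quotient.out (⟦q.out⟧ : Q))⁻¹ = 1
          rw [h1, mul_inv_cancel]
        rw [h1, h2, _root_.map_one]
        rfl }
  have htr : ∀ g : G, LinearMap.trace ℝ ↥(indCarrier N ρ) (indRep N ρ g)
      = LinearMap.trace ℝ (Q → V) (e.conj (indRep N ρ g)) :=
    fun g => (LinearMap.trace_conj' _ e).symm
  have hT : ∀ (g : G) (φ : Q → V) (q : Q),
      (e.conj (indRep N ρ g)) φ q = ρ (ν (q.out * g)) (φ ⟦q.out * g⟧) := by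
    intro g φ q
    rfl
  -- basis of Q → V
  let n := Module.finrank ℝ V
  let bV : Module.Basis (Fin n) ℝ V := Module.finBasis ℝ V
  let bQ : Module.Basis ((_ : Q) × Fin n) ℝ (Q → V) := Pi.basis (fun _ => bV)
  have htrace : ∀ g : G, LinearMap.trace ℝ (Q → V) (e.conj (indRep N ρ g))
      = ∑ q : Q, ∑ i : Fin n,
          bV.repr (ρ (ν (q.out * g)) ((Pi.single q (bV i) : Q → V) ⟦q.out * g⟧)) i := by
    intro g
    rw [LinearMap.trace_eq_matrix_trace ℝ bQ, Matrix.trace]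
    rw [← Finset.univ_sigma_univ, Finset.sum_sigma]
    refine Finset.sum_congr rfl fun q _ => Finset.sum_congr rfl fun i _ => ?_
    rw [Matrix.diag_apply, LinearMap.toMatrix_apply, Pi.basis_apply, Pi.basis_repr, hT]
  constructor
  · -- g ∉ N : all diagonal terms vanish
    intro g hg
    rw [htr g, htrace g]
    refine Finset.sum_eq_zero fun q _ => Finset.sum_eq_zero fun i _ => ?_
    have hne : (⟦q.out * g⟧ : Q) ≠ q := by
      intro h
      apply hg
      have h' : (⟦q.out * g⟧ : Q) = ⟦q.out⟧ := h.trans (Quotient.out_eq q).symm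
      have := QuotientGroup.rightRel_apply.mp (Quotient.exact h')
      -- this : q.out * (q.out * g)⁻¹ ∈ N
      have h2 : q.out * (q.out * g)⁻¹ = q.out * g⁻¹ * q.out⁻¹ := by group
      rw [h2] at this
      have h3 : g⁻¹ ∈ N := by
        have := (Subgroup.Normal.mem_comm_iff inferInstance).mp this
        -- this : g⁻¹ * q.out⁻¹ * q.out ∈ N
        simpa using this
      simpa using N.inv_mem h3
    rw [Pi.single_eq_of_ne hne, map_zero, map_zero]
    rfl
  · -- g ∈ N
    intro g hg
    have hfix : ∀ q : Q, (⟦q.out * g⟧ : Q) = q := by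
      intro q
      refine (Quotient.sound (QuotientGroup.rightRel_apply.mpr ?_)).trans (Quotient.out_eq q)
      have h2 : q.out * (q.out * g)⁻¹ = q.out * g⁻¹ * q.out⁻¹ := by group
      rw [h2]
      exact Subgroup.Normal.conj_mem inferInstance _ (N.inv_mem hg) _
    rw [htr g, htrace g]
    have hterm : ∀ q : Q,
        (∑ i : Fin n,
          bV.repr (ρ (ν (q.out * g)) ((Pi.single q (bV i) : Q → V) ⟦q.out * g⟧)) i)
        = LinearMap.trace ℝ V (ρ ⟨g, hg⟩) := by
      intro q
      have : ∀ i : Fin n, (Pi.single q (bV i) : Q → V) ⟦q.out * g⟧ = bV i := by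
        intro i; rw [hfix q, Pi.single_eq_same]
      simp_rw [this]
      have hsum : (∑ i : Fin n, bV.repr (ρ (ν (q.out * g)) (bV i)) i)
          = LinearMap.trace ℝ V (ρ (ν (q.out * g))) := by
        rw [LinearMap.trace_eq_matrix_trace ℝ bV, Matrix.trace]
        refine Finset.sum_congr rfl fun i _ => ?_
        rw [Matrix.diag_apply, LinearMap.toMatrix_apply]
      rw [hsum]
      -- ν (q.out * g) is G-conjugate to ⟨g, hg⟩
      have hval : ((ν (q.out * g) : G)) = q.out * g * q.out⁻¹ := by
        show q.out * g * (Quotient.out (⟦q.out * g⟧ : Q))⁻¹ = q.out * g * q.out⁻¹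
        rw [hfix q]
      have hGconj : IsConj ((⟨g, hg⟩ : ↥N) : G) ((ν (q.out * g) : ↥N) : G) := by
        rw [hval]
        exact isConj_iff.mpr ⟨q.out, rfl⟩
      rcases (hreal ⟨g, hg⟩ (ν (q.out * g))).mp (Or.inl hGconj) with hc | hc
      · exact trace_rho_conj ρ hc
      · rw [trace_rho_conj ρ hc, trace_rho_inv ρ]
    rw [Finset.sum_congr rfl (fun q _ => hterm q), Finset.sum_const, nsmul_eq_mul]
    congr 1
    rw [Finset.card_univ, Subgroup.index_eq_card, ← Nat.card_eq_fintype_card]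
    exact_mod_cast congrArg (Nat.cast (R := ℝ)) (Nat.card_congr (QuotientGroup.quotientRightRelEquivQuotientLeftRel N))
end

section
/- Let G be a finite group and N a normal subgroup of G such that for every n ∈ N one has (n)^±_G ∩ N = (n)^±_N. Let V be a finite-dimensional real representation of N satisfying the weak gap condition over N: for every subgroup P of N of prime power order and every subgroup K of N with P < K ≤ N, dim_ℝ V^P ≥ 2 · dim_ℝ V^K. Then the induced representation W = Ind_N^G(V) satisfies the weak gap condition over G: for every subgroup P of G of prime power order and every subgroup K of G with P < K ≤ G, dim_ℝ W^P ≥ 2 · dim_ℝ W^K. -/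
/-!
STATEMENT 13: Let `G` be a finite group and `N` a normal subgroup of `G` such that for every
`n ∈ N` one has `(n)^±_G ∩ N = (n)^±_N`. Let `V` be a finite-dimensional real representation
of `N` satisfying the weak gap condition over `N`: for every subgroup `P` of `N` of prime
power order and every subgroup `K` of `N` with `P < K ≤ N`,
`dim_ℝ V^P ≥ 2 · dim_ℝ V^K`. Then the induced representation `W = Ind_N^G(V)` satisfies the
weak gap condition over `G`.

The induced representation is realized concretely: `Ind_N^G(V)` is the space of functions
`f : G → V` with `f (n * x) = ρ n (f x)` for `n ∈ N`, on which `G` acts by right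
translation. -/

/-- A natural number is a prime power `p ^ k` (with `k ≥ 0` allowed). -/
def IsPrimePowerOrder (n : ℕ) : Prop :=
  ∃ p k : ℕ, Nat.Prime p ∧ n = p ^ k

variable {G : Type} [Group G]

set_option linter.unusedSectionVars false
set_option maxHeartbeats 1000000
set_option synthInstance.maxHeartbeats 200000

section Stmt13Aux

open Module Pointwise

namespace Stmt13Aux

variable {G : Type} [Group G] (N : Subgroup G) {V : Type} [AddCommGroup V] [Module ℝ V]

/-- The pullback of a subgroup `S ≤ G` along conjugation by `x`, as a subgroup of `N`:
`{q : N | x⁻¹ q x ∈ S}`. -/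
def pull (x : G) (S : Subgroup G) : Subgroup ↥N where
  carrier := {q : ↥N | x⁻¹ * ↑q * x ∈ S}
  one_mem' := by simpa using S.one_mem
  mul_mem' := by
    intro a b ha hb
    have h : x⁻¹ * ↑(a * b) * x = (x⁻¹ * ↑a * x) * (x⁻¹ * ↑b * x) := by
      push_cast; group
    simpa only [Set.mem_setOf_eq, h] using mul_mem ha hb
  inv_mem' := by
    intro a ha
    have h : x⁻¹ * ↑a⁻¹ * x = (x⁻¹ * ↑a * x)⁻¹ := by push_cast; group
    simpa only [Set.mem_setOf_eq, h] using inv_mem ha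

lemma mem_pull {x : G} {S : Subgroup G} {q : ↥N} : q ∈ pull N x S ↔ x⁻¹ * ↑q * x ∈ S := Iff.rfl

lemma pull_mono (x : G) {S T : Subgroup G} (h : S ≤ T) : pull N x S ≤ pull N x T :=
  fun _ hq => h hq

lemma card_pull_dvd [Finite G] (x : G) (S : Subgroup G) :
    Nat.card ↥(pull N x S) ∣ Nat.card ↥S := by
  have hinj : Function.Injective
      (fun q : ↥(pull N x S) => (⟨x⁻¹ * ↑↑q * x, q.2⟩ : ↥S)) := by
    intro a b hab
    have : x⁻¹ * ↑↑a * x = x⁻¹ * ↑↑b * x := congrArg Subtype.val hab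
    exact Subtype.ext (Subtype.ext (mul_left_cancel (mul_right_cancel this)))
  exact Subgroup.card_dvd_of_injective
    { toFun := fun q : ↥(pull N x S) => (⟨x⁻¹ * ↑↑q * x, q.2⟩ : ↥S)
      map_one' := by
        apply Subtype.ext; simp
      map_mul' := by
        intro a b
        apply Subtype.ext
        push_cast
        group } hinj

lemma isPrimePowerOrder_pull [Finite G] (x : G) {S : Subgroup G}
    (hS : IsPrimePowerOrder (Nat.card ↥S)) : IsPrimePowerOrder (Nat.card ↥(pull N x S)) := by
  obtain ⟨p, k, hp, hcard⟩ := hS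
  have := card_pull_dvd N x S
  rw [hcard] at this
  obtain ⟨i, _, hi⟩ := (Nat.dvd_prime_pow hp).mp this
  exact ⟨p, i, hp, hi⟩

variable (ρ : Representation ℝ ↥N V)

open Classical in
/-- The "spike": `z ↦ ρ z w` for `z ∈ N`, `0` otherwise. -/
noncomputable def sp (w : V) (z : G) : V :=
  if h : z ∈ N then ρ ⟨z, h⟩ w else 0

lemma sp_of_not_mem {w : V} {z : G} (h : z ∉ N) : sp N ρ w z = 0 := dif_neg h

lemma sp_mul (w : V) (n : ↥N) (z : G) : sp N ρ w (↑n * z) = ρ n (sp N ρ w z) := by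
  by_cases h : z ∈ N
  · rw [sp, sp, dif_pos h, dif_pos (mul_mem n.2 h)]
    have he : (⟨↑n * z, mul_mem n.2 h⟩ : ↥N) = n * ⟨z, h⟩ := rfl
    rw [he, map_mul, Module.End.mul_apply]
  · rw [sp_of_not_mem N ρ h, sp_of_not_mem N ρ (fun hc => h ((mul_mem_cancel_left n.2).mp hc)),
      map_zero]

lemma sp_add (w w' : V) (z : G) : sp N ρ (w + w') z = sp N ρ w z + sp N ρ w' z := by
  by_cases h : z ∈ N
  · rw [sp, sp, sp, dif_pos h, dif_pos h, dif_pos h, map_add]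
  · rw [sp_of_not_mem N ρ h, sp_of_not_mem N ρ h, sp_of_not_mem N ρ h, add_zero]

lemma sp_smul (c : ℝ) (w : V) (z : G) : sp N ρ (c • w) z = c • sp N ρ w z := by
  by_cases h : z ∈ N
  · rw [sp, sp, dif_pos h, dif_pos h, map_smul]
  · rw [sp_of_not_mem N ρ h, sp_of_not_mem N ρ h, smul_zero]

variable [Fintype G]

open Classical in
/-- Averaging over `P` of a spike at `x`: this turns a suitable vector `w` into an element
of `Ind_N^G V` fixed by `P`, supported on the coset `x(N ⊔ P)`. -/
noncomputable def avgMap (P : Subgroup G) (x : G) : V →ₗ[ℝ] (G → V) where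
  toFun w := fun y => ∑ p : ↥P, sp N ρ w (y * ↑p * x⁻¹)
  map_add' := by
    intro w w'
    funext y
    simp only [sp_add, Pi.add_apply, Finset.sum_add_distrib]
  map_smul' := by
    intro c w
    funext y
    simp only [sp_smul, RingHom.id_apply, Pi.smul_apply, Finset.smul_sum]

open Classical in
lemma avgMap_apply (P : Subgroup G) (x : G) (w : V) (y : G) :
    avgMap N ρ P x w y = ∑ p : ↥P, sp N ρ w (y * ↑p * x⁻¹) := rfl

lemma avgMap_equivariant (P : Subgroup G) (x : G) (w : V) (n : ↥N) (y : G) :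
    avgMap N ρ P x w (↑n * y) = ρ n (avgMap N ρ P x w y) := by
  classical
  rw [avgMap_apply, avgMap_apply, map_sum]
  refine Finset.sum_congr rfl fun p _ => ?_
  rw [show (↑n * y) * ↑p * x⁻¹ = ↑n * (y * ↑p * x⁻¹) by group]
  exact sp_mul N ρ w n _

lemma avgMap_rightP (P : Subgroup G) (x : G) (w : V) {p₀ : G} (hp₀ : p₀ ∈ P) (y : G) :
    avgMap N ρ P x w (y * p₀) = avgMap N ρ P x w y := by
  classical
  rw [avgMap_apply, avgMap_apply]
  refine Fintype.sum_equiv (Equiv.mulLeft (⟨p₀, hp₀⟩ : ↥P)) _ _ fun p => ?_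
  simp only [Equiv.coe_mulLeft]
  congr 1
  push_cast
  group

lemma avgMap_eq_zero [N.Normal] (P : Subgroup G) (x : G) (w : V) (y : G)
    (h : x⁻¹ * y ∉ N ⊔ P) : avgMap N ρ P x w y = 0 := by
  classical
  rw [avgMap_apply]
  refine Finset.sum_eq_zero fun p _ => sp_of_not_mem N ρ fun hc => h ?_
  have hy : x⁻¹ * y = (x⁻¹ * (y * ↑p * x⁻¹) * x) * (↑p : G)⁻¹ := by group
  have hn : x⁻¹ * (y * ↑p * x⁻¹) * x ∈ N := by
    simpa using (‹N.Normal›).conj_mem _ hc x⁻¹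
  rw [hy]
  exact mul_mem ((le_sup_left : N ≤ N ⊔ P) hn)
    ((le_sup_right : P ≤ N ⊔ P) (inv_mem p.2))

lemma avgMap_eval_self (P : Subgroup G) (x : G) (w : V)
    (hw : w ∈ fixedSubmodule ρ (pull N x P)) :
    ∃ m : ℕ, 0 < m ∧ avgMap N ρ P x w x = m • w := by
  classical
  refine ⟨(Finset.univ.filter (fun p : ↥P => x * ↑p * x⁻¹ ∈ N)).card, ?_, ?_⟩
  · refine Finset.card_pos.mpr ⟨1, Finset.mem_filter.mpr ⟨Finset.mem_univ _, ?_⟩⟩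
    simpa using N.one_mem
  · rw [avgMap_apply, ← Finset.sum_filter_add_sum_filter_not Finset.univ
      (fun p : ↥P => x * ↑p * x⁻¹ ∈ N)]
    rw [Finset.sum_eq_zero (fun p hp => sp_of_not_mem N ρ (Finset.mem_filter.mp hp).2),
      add_zero]
    rw [Finset.sum_congr rfl (fun p hp => ?_), Finset.sum_const]
    have hmem : x * ↑p * x⁻¹ ∈ N := (Finset.mem_filter.mp hp).2
    rw [sp, dif_pos hmem]
    refine hw ⟨x * ↑p * x⁻¹, hmem⟩ ?_
    show x⁻¹ * (x * ↑p * x⁻¹) * x ∈ P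
    rw [show x⁻¹ * (x * ↑p * x⁻¹) * x = ↑p by group]
    exact p.2

lemma indRep_coe (g : G) (u : ↥(indCarrier N ρ)) (x : G) :
    ((indRep N ρ g u : ↥(indCarrier N ρ)) : G → V) x = (u : G → V) (x * g) := rfl

lemma mem_fixed_ind_iff (K : Subgroup G) (u : ↥(indCarrier N ρ)) :
    u ∈ fixedSubmodule (indRep N ρ) K ↔
      ∀ x : G, ∀ k ∈ K, (u : G → V) (x * k) = (u : G → V) x := by
  constructor
  · intro hu x k hk
    have h1 := hu k hk
    have := congrFun (congrArg Subtype.val h1) x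
    rwa [indRep_coe] at this
  · intro h k hk
    apply Subtype.ext
    funext x
    rw [indRep_coe]
    exact h x k hk

lemma eval_mem (K : Subgroup G) (u : ↥(indCarrier N ρ))
    (hu : u ∈ fixedSubmodule (indRep N ρ) K) (x : G) :
    (u : G → V) x ∈ fixedSubmodule ρ (pull N x K) := by
  intro q hq
  have h1 : (ρ q) ((u : G → V) x) = (u : G → V) (↑q * x) := (u.2 q x).symm
  rw [h1, show (↑q : G) * x = x * (x⁻¹ * ↑q * x) by group]
  exact (mem_fixed_ind_iff N ρ K u).mp hu x _ hq

lemma vanish_propagate [N.Normal] (K : Subgroup G) (u : ↥(indCarrier N ρ))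
    (hu : u ∈ fixedSubmodule (indRep N ρ) K) {x y : G} (hxy : x⁻¹ * y ∈ N ⊔ K)
    (h0 : (u : G → V) x = 0) : (u : G → V) y = 0 := by
  have hm : x⁻¹ * y ∈ ((N : Set G) * (K : Set G)) := by
    rw [← Subgroup.normal_mul]; exact hxy
  obtain ⟨n, hn, k, hk, hnk⟩ := hm
  have hnk' : n * k = x⁻¹ * y := hnk
  have hy : y = ((x * n * x⁻¹) : G) * (x * k) := by
    rw [show ((x * n * x⁻¹) : G) * (x * k) = x * (n * k) by group, hnk']; group
  have hN : x * n * x⁻¹ ∈ N := (‹N.Normal›).conj_mem n hn x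
  rw [hy, u.2 ⟨x * n * x⁻¹, hN⟩ (x * k),
    (mem_fixed_ind_iff N ρ K u).mp hu x k hk, h0, map_zero]

lemma fixed_anti {Q Q' : Subgroup ↥N} (h : Q ≤ Q') :
    fixedSubmodule ρ Q' ≤ fixedSubmodule ρ Q :=
  fun _ hv q hq => hv q (h hq)

/-- Evaluation at `x` as a linear map on the `K`-fixed part of the induced representation. -/
noncomputable def evalAt (K : Subgroup G) (x : G) :
    ↥(fixedSubmodule (indRep N ρ) K) →ₗ[ℝ] V :=
  (LinearMap.proj x).comp ((indCarrier N ρ).subtype.comp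
    (fixedSubmodule (indRep N ρ) K).subtype)

lemma evalAt_apply (K : Subgroup G) (x : G) (u : ↥(fixedSubmodule (indRep N ρ) K)) :
    evalAt N ρ K x u = ((u : ↥(indCarrier N ρ)) : G → V) x := rfl

/-- Evaluation at `x`, with codomain restricted to the fixed subspace. -/
noncomputable def evalAtRes (K : Subgroup G) (x : G) :
    ↥(fixedSubmodule (indRep N ρ) K) →ₗ[ℝ] ↥(fixedSubmodule ρ (pull N x K)) :=
  LinearMap.codRestrict _ (evalAt N ρ K x) (fun u => eval_mem N ρ K ↑u u.2 x)

variable {D : Type} [AddCommGroup D] [Module ℝ D]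

/-- Assembling a family of linear maps into `V` into a single map `D →ₗ (G → V)`,
by averaging spikes at the points `pts i`. -/
noncomputable def assemble (P : Subgroup G) {ι : Type} [Fintype ι] (pts : ι → G)
    (T : ι → (D →ₗ[ℝ] V)) : D →ₗ[ℝ] (G → V) :=
  ∑ i, (avgMap N ρ P (pts i)).comp (T i)

lemma assemble_apply (P : Subgroup G) {ι : Type} [Fintype ι] (pts : ι → G)
    (T : ι → (D →ₗ[ℝ] V)) (d : D) (y : G) :
    assemble N ρ P pts T d y = ∑ i, avgMap N ρ P (pts i) (T i d) y := by
  simp [assemble, LinearMap.sum_apply, Finset.sum_apply]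

lemma assemble_mem_ind (P : Subgroup G) {ι : Type} [Fintype ι] (pts : ι → G)
    (T : ι → (D →ₗ[ℝ] V)) (d : D) : assemble N ρ P pts T d ∈ indCarrier N ρ := by
  intro n x
  rw [assemble_apply, assemble_apply, map_sum]
  exact Finset.sum_congr rfl fun i _ => avgMap_equivariant N ρ P (pts i) (T i d) n x

lemma assemble_fixed (P : Subgroup G) {ι : Type} [Fintype ι] (pts : ι → G)
    (T : ι → (D →ₗ[ℝ] V)) (d : D) :
    (⟨assemble N ρ P pts T d, assemble_mem_ind N ρ P pts T d⟩ : ↥(indCarrier N ρ)) ∈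
      fixedSubmodule (indRep N ρ) P := by
  rw [mem_fixed_ind_iff]
  intro x k hk
  show assemble N ρ P pts T d (x * k) = assemble N ρ P pts T d x
  rw [assemble_apply, assemble_apply]
  exact Finset.sum_congr rfl fun i _ => avgMap_rightP N ρ P (pts i) (T i d) hk x

/-- The assembled map, landing in the `P`-fixed part of the induced representation. -/
noncomputable def bigLift (P : Subgroup G) {ι : Type} [Fintype ι] (pts : ι → G)
    (T : ι → (D →ₗ[ℝ] V)) : D →ₗ[ℝ] ↥(fixedSubmodule (indRep N ρ) P) :=
  LinearMap.codRestrict _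
    (LinearMap.codRestrict (indCarrier N ρ) (assemble N ρ P pts T)
      (assemble_mem_ind N ρ P pts T))
    (assemble_fixed N ρ P pts T)

lemma bigLift_injective [N.Normal] (P : Subgroup G) {ι : Type} [Fintype ι] (pts : ι → G)
    (T : ι → (D →ₗ[ℝ] V))
    (hsep : ∀ i i' : ι, (pts i)⁻¹ * pts i' ∈ N ⊔ P → i = i')
    (hT : ∀ i d, T i d ∈ fixedSubmodule ρ (pull N (pts i) P))
    (hval : ∀ d : D, (∀ i, T i d = 0) → d = 0) :
    Function.Injective (bigLift N ρ P pts T) := by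
  have key : ∀ d : D, bigLift N ρ P pts T d = 0 → d = 0 := by
    intro d hd
    refine hval d fun i => ?_
    have hfun : assemble N ρ P pts T d = 0 :=
      congrArg Subtype.val (congrArg Subtype.val hd)
    obtain ⟨m, hm, hev⟩ := avgMap_eval_self N ρ P (pts i) (T i d) (hT i d)
    have h0 : assemble N ρ P pts T d (pts i) = 0 := by rw [hfun]; rfl
    rw [assemble_apply, Finset.sum_eq_single i
      (fun i' _ hne => avgMap_eq_zero N ρ P (pts i') _ (pts i)
        (fun hc => hne (hsep i' i hc)))
      (fun h => absurd (Finset.mem_univ i) h), hev] at h0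
    have : (m : ℝ) • T i d = 0 := by
      rw [Nat.cast_smul_eq_nsmul ℝ]; exact h0
    rcases smul_eq_zero.mp this with h | h
    · exact absurd (Nat.cast_eq_zero.mp h) (Nat.pos_iff_ne_zero.mp hm)
    · exact h
  intro a b hab
  have hd : bigLift N ρ P pts T (a - b) = 0 := by rw [map_sub, hab, sub_self]
  exact sub_eq_zero.mp (key _ hd)

end Stmt13Aux

section InjHelper

open Module

lemma exists_injective_pi {n m : ℕ} (h : n ≤ m) :
    ∃ j : (Fin n → ℝ) →ₗ[ℝ] (Fin m → ℝ), Function.Injective j := by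
  rcases Nat.eq_zero_or_pos n with hn0 | hn0
  · subst hn0
    refine ⟨0, fun a b _ => funext fun i => Fin.elim0 i⟩
  · let s : Fin m → Fin n := fun i => if hi : (i : ℕ) < n then ⟨i, hi⟩ else ⟨0, hn0⟩
    have hs : Function.Surjective s := by
      intro j
      refine ⟨⟨(j : ℕ), lt_of_lt_of_le j.2 h⟩, ?_⟩
      simp only [s]
      rw [dif_pos j.2]
    exact ⟨LinearMap.funLeft ℝ ℝ s, LinearMap.funLeft_injective_of_surjective ℝ ℝ s hs⟩

lemma exists_injective_linearMap {A B : Type} [AddCommGroup A] [Module ℝ A]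
    [AddCommGroup B] [Module ℝ B] [FiniteDimensional ℝ A] [FiniteDimensional ℝ B]
    (h : finrank ℝ A ≤ finrank ℝ B) : ∃ j : A →ₗ[ℝ] B, Function.Injective j := by
  obtain ⟨j0, hj0⟩ := exists_injective_pi h
  refine ⟨((Module.finBasis ℝ B).equivFun.symm.toLinearMap.comp
    (j0.comp (Module.finBasis ℝ A).equivFun.toLinearMap)), ?_⟩
  exact ((Module.finBasis ℝ B).equivFun.symm.injective.comp hj0).comp
    (Module.finBasis ℝ A).equivFun.injective

lemma exists_injective_linearMap_prod {A B : Type} [AddCommGroup A] [Module ℝ A]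
    [AddCommGroup B] [Module ℝ B] [FiniteDimensional ℝ A] [FiniteDimensional ℝ B]
    (h : 2 * finrank ℝ A ≤ finrank ℝ B) :
    ∃ j : (A × A) →ₗ[ℝ] B, Function.Injective j := by
  apply exists_injective_linearMap
  rw [Module.finrank_prod]
  omega

lemma two_mul_finrank_le_of_injective {A B : Type} [AddCommGroup A] [Module ℝ A]
    [AddCommGroup B] [Module ℝ B] [FiniteDimensional ℝ B]
    (Φ : (A × A) →ₗ[ℝ] B) (hΦ : Function.Injective Φ) :
    2 * finrank ℝ A ≤ finrank ℝ B := by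
  haveI : FiniteDimensional ℝ A :=
    FiniteDimensional.of_injective (Φ.comp (LinearMap.inl ℝ A A))
      (hΦ.comp LinearMap.inl_injective)
  have hle := LinearMap.finrank_le_finrank_of_injective hΦ
  rw [Module.finrank_prod] at hle
  omega

end InjHelper

end Stmt13Aux


set_option linter.unusedVariables false

open Stmt13Aux Pointwise

set_option synthInstance.maxHeartbeats 1000000

theorem statement13 {G : Type} [Group G] [Fintype G] (N : Subgroup G) [N.Normal]
    (hreal : ∀ n x : ↥N,
      (IsConj (n : G) (x : G) ∨ IsConj ((n : G))⁻¹ (x : G)) ↔ (IsConj n x ∨ IsConj n⁻¹ x))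
    {V : Type} [AddCommGroup V] [Module ℝ V] [FiniteDimensional ℝ V]
    (ρ : Representation ℝ ↥N V)
    (hgap : ∀ P K : Subgroup ↥N, IsPrimePowerOrder (Nat.card ↥P) → P < K →
      2 * fixedDim ρ K ≤ fixedDim ρ P) :
    ∀ P K : Subgroup G, IsPrimePowerOrder (Nat.card ↥P) → P < K →
      2 * fixedDim (indRep N ρ) K ≤ fixedDim (indRep N ρ) P := by
  classical
  intro P K hPP hPK
  have hNormal : N.Normal := inferInstance
  haveI : Fintype (G ⧸ (N ⊔ K)) := Fintype.ofFinite _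
  suffices h : ∃ Φ : (↥(fixedSubmodule (indRep N ρ) K) × ↥(fixedSubmodule (indRep N ρ) K)) →ₗ[ℝ]
      ↥(fixedSubmodule (indRep N ρ) P), Function.Injective Φ by
    obtain ⟨Φ, hΦ⟩ := h
    exact two_mul_finrank_le_of_injective (A := ↥(fixedSubmodule (indRep N ρ) K))
      (B := ↥(fixedSubmodule (indRep N ρ) P)) Φ hΦ
  rcases lt_or_eq_of_le (inf_le_inf_left N hPK.le) with hlt | heq
  · -- Case N ⊓ P < N ⊓ K
    obtain ⟨n₀, hn₀K, hn₀P⟩ := SetLike.exists_of_lt hlt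
    have hpull : ∀ x : G, pull N x P < pull N x K := by
      intro x
      refine lt_of_le_of_ne (pull_mono N x hPK.le) fun hEq => hn₀P ?_
      have hq : (⟨x * n₀ * x⁻¹, hNormal.conj_mem n₀ hn₀K.1 x⟩ : ↥N) ∈ pull N x K := by
        show x⁻¹ * (x * n₀ * x⁻¹) * x ∈ K
        rw [show x⁻¹ * (x * n₀ * x⁻¹) * x = n₀ by group]
        exact hn₀K.2
      rw [← hEq] at hq
      have hq2 : x⁻¹ * (x * n₀ * x⁻¹) * x ∈ P := hq
      rw [show x⁻¹ * (x * n₀ * x⁻¹) * x = n₀ by group] at hq2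
      exact ⟨hn₀K.1, hq2⟩
    have hj : ∀ c : G ⧸ (N ⊔ K),
        ∃ jc : (↥(fixedSubmodule ρ (pull N (Quotient.out c) K)) ×
            ↥(fixedSubmodule ρ (pull N (Quotient.out c) K))) →ₗ[ℝ]
            ↥(fixedSubmodule ρ (pull N (Quotient.out c) P)), Function.Injective jc := by
      intro c
      apply exists_injective_linearMap_prod
      have h2 := hgap (pull N (Quotient.out c) P) (pull N (Quotient.out c) K)
        (isPrimePowerOrder_pull N (Quotient.out c) hPP) (hpull _)
      unfold fixedDim at h2
      exact h2
    choose j hjinj using hj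
    refine ⟨_, bigLift_injective (D := (↥(fixedSubmodule (indRep N ρ) K) × ↥(fixedSubmodule (indRep N ρ) K))) N ρ P (fun c : G ⧸ (N ⊔ K) => Quotient.out c)
      (fun c => ((fixedSubmodule ρ (pull N (Quotient.out c) P)).subtype).comp
        ((j c).comp (LinearMap.prodMap (evalAtRes N ρ K (Quotient.out c))
          (evalAtRes N ρ K (Quotient.out c))))) ?_ ?_ ?_⟩
    · intro c c' hc
      have h1 : (Quotient.out c)⁻¹ * Quotient.out c' ∈ N ⊔ K := sup_le_sup_left hPK.le N hc
      have h2 := QuotientGroup.eq.mpr h1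
      rwa [QuotientGroup.out_eq', QuotientGroup.out_eq'] at h2
    · intro c d
      exact SetLike.coe_mem _
    · intro d hd
      have hf : ∀ c : G ⧸ (N ⊔ K), ((d.1 : ↥(indCarrier N ρ)) : G → V) (Quotient.out c) = 0 ∧
          ((d.2 : ↥(indCarrier N ρ)) : G → V) (Quotient.out c) = 0 := by
        intro c
        have h2 : j c (evalAtRes N ρ K (Quotient.out c) d.1,
            evalAtRes N ρ K (Quotient.out c) d.2) = 0 := Subtype.ext (hd c)
        have h4 : (evalAtRes N ρ K (Quotient.out c) d.1,
            evalAtRes N ρ K (Quotient.out c) d.2) = 0 := hjinj c (by rw [h2, map_zero])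
        exact ⟨congrArg Subtype.val (congrArg Prod.fst h4),
          congrArg Subtype.val (congrArg Prod.snd h4)⟩
      have hd1 : d.1 = 0 := by
        apply Subtype.ext; apply Subtype.ext; funext y
        exact vanish_propagate N ρ K ↑d.1 d.1.2
          (QuotientGroup.eq.mp (QuotientGroup.out_eq' (QuotientGroup.mk y)))
          (hf (QuotientGroup.mk y)).1
      have hd2 : d.2 = 0 := by
        apply Subtype.ext; apply Subtype.ext; funext y
        exact vanish_propagate N ρ K ↑d.2 d.2.2
          (QuotientGroup.eq.mp (QuotientGroup.out_eq' (QuotientGroup.mk y)))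
          (hf (QuotientGroup.mk y)).2
      exact Prod.ext_iff.mpr ⟨hd1, hd2⟩
  · -- Case N ⊓ P = N ⊓ K
    have hLM : N ⊔ P < N ⊔ K := by
      refine lt_of_le_of_ne (sup_le_sup_left hPK.le N) fun hEq => ?_
      obtain ⟨k, hkK, hkP⟩ := SetLike.exists_of_lt hPK
      have hk' : k ∈ ((N : Set G) * (P : Set G)) := by
        rw [← Subgroup.normal_mul, hEq]
        exact (le_sup_right : K ≤ N ⊔ K) hkK
      obtain ⟨n, hn, p, hp, hnp⟩ := hk'
      have hnp' : n * p = k := hnp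
      have hnK : n ∈ K := by
        have hself : n = k * p⁻¹ := by rw [← hnp']; group
        rw [hself]; exact mul_mem hkK (K.inv_mem (hPK.le hp))
      have hnP : n ∈ P := by
        have hx : n ∈ N ⊓ K := ⟨hn, hnK⟩
        rw [← heq] at hx
        exact hx.2
      exact hkP (by rw [← hnp']; exact mul_mem hnP hp)
    obtain ⟨m₀, hm₀M, hm₀L⟩ := SetLike.exists_of_lt hLM
    let pts : (G ⧸ (N ⊔ K)) × Bool → G :=
      fun i => if i.2 then Quotient.out i.1 * m₀ else Quotient.out i.1
    have hmkpts : ∀ i : (G ⧸ (N ⊔ K)) × Bool, (QuotientGroup.mk (pts i) : G ⧸ (N ⊔ K)) = i.1 := by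
      rintro ⟨c, b⟩
      cases b
      · exact QuotientGroup.out_eq' c
      · show QuotientGroup.mk (Quotient.out c * m₀) = c
        rw [QuotientGroup.mk_mul_of_mem _ hm₀M, QuotientGroup.out_eq']
    refine ⟨_, bigLift_injective (D := (↥(fixedSubmodule (indRep N ρ) K) × ↥(fixedSubmodule (indRep N ρ) K))) N ρ P pts
      (fun i => ((fixedSubmodule ρ (pull N (pts i) K)).subtype).comp
        ((evalAtRes N ρ K (pts i)).comp
          (if i.2 then LinearMap.snd ℝ _ _ else LinearMap.fst ℝ _ _))) ?_ ?_ ?_⟩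
    · intro i i' hc
      have hcM : (pts i)⁻¹ * pts i' ∈ N ⊔ K := sup_le_sup_left hPK.le N hc
      have h1 : i.1 = i'.1 := by
        have h2 := QuotientGroup.eq.mpr hcM
        rwa [hmkpts, hmkpts] at h2
      rcases i with ⟨c, b⟩; rcases i' with ⟨c', b'⟩
      simp only at h1
      subst h1
      cases b <;> cases b'
      · rfl
      · exfalso
        have hc' : (Quotient.out c)⁻¹ * (Quotient.out c * m₀) ∈ N ⊔ P := hc
        rw [inv_mul_cancel_left] at hc'
        exact hm₀L hc'
      · exfalso
        have hc' : (Quotient.out c * m₀)⁻¹ * Quotient.out c ∈ N ⊔ P := hc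
        rw [show (Quotient.out c * m₀)⁻¹ * Quotient.out c = m₀⁻¹ by group] at hc'
        exact hm₀L ((N ⊔ P).inv_mem_iff.mp hc')
      · rfl
    · intro i d
      exact fixed_anti N ρ (pull_mono N (pts i) hPK.le) (SetLike.coe_mem _)
    · intro d hd
      have hd1 : d.1 = 0 := by
        apply Subtype.ext; apply Subtype.ext; funext y
        have h0 : ((d.1 : ↥(indCarrier N ρ)) : G → V)
            (Quotient.out (QuotientGroup.mk y : G ⧸ (N ⊔ K))) = 0 :=
          hd (QuotientGroup.mk y, false)
        exact vanish_propagate N ρ K ↑d.1 d.1.2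
          (QuotientGroup.eq.mp (QuotientGroup.out_eq' (QuotientGroup.mk y))) h0
      have hd2 : d.2 = 0 := by
        apply Subtype.ext; apply Subtype.ext; funext y
        have h0 : ((d.2 : ↥(indCarrier N ρ)) : G → V)
            (Quotient.out (QuotientGroup.mk y : G ⧸ (N ⊔ K)) * m₀) = 0 :=
          hd (QuotientGroup.mk y, true)
        refine vanish_propagate N ρ K ↑d.2 d.2.2 (x := Quotient.out (QuotientGroup.mk y) * m₀)
          ?_ h0
        rw [show (Quotient.out (QuotientGroup.mk y : G ⧸ (N ⊔ K)) * m₀)⁻¹ * y =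
          m₀⁻¹ * ((Quotient.out (QuotientGroup.mk y : G ⧸ (N ⊔ K)))⁻¹ * y) by group]
        exact mul_mem ((N ⊔ K).inv_mem hm₀M)
          (QuotientGroup.eq.mp (QuotientGroup.out_eq' (QuotientGroup.mk y)))
      exact Prod.ext_iff.mpr ⟨hd1, hd2⟩
end

section
/- Let G be a finite group and N a normal subgroup of G such that for every n ∈ N one has (n)^±_G ∩ N = (n)^±_N. Let V be a finite-dimensional real representation of N satisfying: (2) for every subgroup P of N of prime power order and every P < K ≤ N, dim_ℝ V^P ≥ 2 · dim_ℝ V^K; (3) dim_ℝ V^P ≥ 5 for every subgroup P of N of prime power order, and dim_ℝ V^K ≥ 2 for every pseudocyclic subgroup K of N; (4) for every pseudocyclic subgroup K of N and every K < K' ≤ N, dim_ℝ V^{K'} < dim_ℝ V^K. Then the induced representation W = Ind_N^G(V) satisfies the corresponding conditions (2), (3) and (4) over G. -/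
/-- A finite group is pseudocyclic if for some prime `p` it contains a normal `p`-subgroup
`P` such that the quotient `K ⧸ P` is cyclic. -/
def IsPseudocyclic (K : Type) [Group K] : Prop :=
  ∃ (p : ℕ) (P : Subgroup K) (hP : P.Normal), Nat.Prime p ∧
    (∃ k : ℕ, Nat.card ↥P = p ^ k) ∧ (haveI := hP; IsCyclic (K ⧸ P))

variable {G : Type} [Group G]

/-! ### Auxiliary lemmas -/

section PseudoAux

/-- Pseudocyclicity transfers along group isomorphisms. -/
lemma isPseudocyclic_of_mulEquiv {K K' : Type} [Group K] [Group K'] (e : K ≃* K')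
    (h : IsPseudocyclic K) : IsPseudocyclic K' := by
  obtain ⟨p, P, hP, hp, ⟨k, hk⟩, hcyc⟩ := h
  haveI := hP
  haveI := hcyc
  haveI hP' : (P.map e.toMonoidHom).Normal := hP.map e.toMonoidHom e.surjective
  refine ⟨p, P.map e.toMonoidHom, hP', hp, ⟨k, ?_⟩, ?_⟩
  · rw [← hk]
    exact Nat.card_congr ((P.equivMapOfInjective e.toMonoidHom e.injective).toEquiv).symm
  · exact isCyclic_of_surjective _ (QuotientGroup.congr P (P.map e.toMonoidHom) e rfl).surjective

/-- A subgroup of a finite pseudocyclic group is pseudocyclic. -/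
lemma isPseudocyclic_subgroup {K : Type} [Group K] [Finite K] (h : IsPseudocyclic K)
    (L : Subgroup K) : IsPseudocyclic ↥L := by
  obtain ⟨p, P, hP, hp, ⟨k, hk⟩, hcyc⟩ := h
  haveI := hP
  haveI := hcyc
  refine ⟨p, P.subgroupOf L, Subgroup.normal_subgroupOf, hp, ?_, ?_⟩
  · have h1 : Nat.card ↥(P.subgroupOf L) = Nat.card ↥(P ⊓ L : Subgroup K) := by
      rw [← Subgroup.inf_subgroupOf_right]
      exact Nat.card_congr (Subgroup.subgroupOfEquivOfLe inf_le_right).toEquiv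
    have h2 : Nat.card ↥(P.subgroupOf L) ∣ p ^ k := by
      rw [h1, ← hk]
      exact Subgroup.card_dvd_of_le inf_le_left
    obtain ⟨j, _, hj⟩ := (Nat.dvd_prime_pow hp).1 h2
    exact ⟨j, hj⟩
  · set φ : ↥L →* K ⧸ P := (QuotientGroup.mk' P).comp L.subtype with hφ
    have hker : φ.ker = P.subgroupOf L := by
      ext x
      simp [hφ, MonoidHom.mem_ker, QuotientGroup.eq_one_iff, Subgroup.mem_subgroupOf]
    haveI : IsCyclic (↥L ⧸ φ.ker) :=
      isCyclic_of_surjective _ (QuotientGroup.quotientKerEquivRange φ).symm.surjective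
    exact isCyclic_of_surjective _ (QuotientGroup.quotientMulEquivOfEq hker).surjective

end PseudoAux

section Aux

open Subgroup LinearMap

variable {G : Type} [Group G] [Fintype G] {N : Subgroup G} [N.Normal]
variable {V : Type} [AddCommGroup V] [Module ℝ V] [FiniteDimensional ℝ V]
variable (ρ : Representation ℝ ↥N V)

/-- `K.subgroupOf N` is isomorphic to the subgroup `(K ⊓ N).subgroupOf K` of `K`. -/
lemma subgroupOf_N_equiv (K : Subgroup G) :
    Nonempty (↥(K.subgroupOf N) ≃* ↥((K ⊓ N).subgroupOf K)) := by
  refine ⟨((MulEquiv.subgroupCongr (Subgroup.inf_subgroupOf_right K N).symm).trans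
    (Subgroup.subgroupOfEquivOfLe inf_le_right)).trans
    (Subgroup.subgroupOfEquivOfLe (inf_le_left : K ⊓ N ≤ K)).symm⟩

lemma isPrimePowerOrder_subgroupOf {P : Subgroup G}
    (h : IsPrimePowerOrder (Nat.card ↥P)) :
    IsPrimePowerOrder (Nat.card ↥(P.subgroupOf N)) := by
  obtain ⟨p, k, hp, hk⟩ := h
  obtain ⟨e⟩ := subgroupOf_N_equiv (N := N) P
  have h1 : Nat.card ↥(P.subgroupOf N) = Nat.card ↥(P ⊓ N : Subgroup G) := by
    rw [← Subgroup.inf_subgroupOf_right]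
    exact Nat.card_congr (Subgroup.subgroupOfEquivOfLe inf_le_right).toEquiv
  have h2 : Nat.card ↥(P.subgroupOf N) ∣ p ^ k := by
    rw [h1, ← hk]
    exact Subgroup.card_dvd_of_le inf_le_left
  obtain ⟨j, _, hj⟩ := (Nat.dvd_prime_pow hp).1 h2
  exact ⟨p, j, hp, hj⟩

lemma isPseudocyclic_subgroupOf {K : Subgroup G} (h : IsPseudocyclic ↥K) :
    IsPseudocyclic ↥(K.subgroupOf N) := by
  obtain ⟨e⟩ := subgroupOf_N_equiv (N := N) K
  exact isPseudocyclic_of_mulEquiv e.symm (isPseudocyclic_subgroup h _)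

/-- The fixed submodule equals the invariants of the restricted representation. -/
lemma fixedSubmodule_eq_invariants (L : Subgroup ↥N) :
    fixedSubmodule ρ L =
      Representation.invariants (k := ℝ) (G := ↥L) (V := V) (ρ.comp L.subtype) := by
  ext v
  rw [Representation.mem_invariants]
  exact ⟨fun hv g => hv ↑g g.2, fun hv g hg => hv ⟨g, hg⟩⟩

/-- Dimension of the fixed subspace as a normalized character sum. -/
lemma fixedDim_cast (L : Subgroup ↥N) [Fintype ↥L] :
    (fixedDim ρ L : ℝ) =
      (Fintype.card ↥L : ℝ)⁻¹ * ∑ n : ↥L, trace ℝ V (ρ ↑n) := by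
  have hcard : (Fintype.card ↥L : ℝ) ≠ 0 := Nat.cast_ne_zero.2 Fintype.card_ne_zero
  haveI : Invertible (Fintype.card ↥L : ℝ) := invertibleOfNonzero hcard
  set σ : Representation ℝ ↥L V := ρ.comp L.subtype with hσ
  have h1 : trace ℝ V σ.averageMap = (Module.finrank ℝ ↥(σ.invariants) : ℝ) :=
    (Representation.isProj_averageMap σ).trace
  have h2 : σ.averageMap = ⅟(Fintype.card ↥L : ℝ) • ∑ n : ↥L, σ n := by
    rw [Representation.averageMap, GroupAlgebra.average, map_smul, map_sum]
    simp only [Representation.asAlgebraHom_of]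
  calc (fixedDim ρ L : ℝ) = trace ℝ V σ.averageMap := by
        rw [h1, fixedDim, fixedSubmodule_eq_invariants]
    _ = (Fintype.card ↥L : ℝ)⁻¹ * ∑ n : ↥L, trace ℝ V (ρ ↑n) := by
        rw [h2, map_smul, map_sum, invOf_eq_inv, smul_eq_mul]
        rfl

lemma trace_eq_of_isConj {a b : ↥N} (h : IsConj a b) :
    trace ℝ V (ρ a) = trace ℝ V (ρ b) := by
  obtain ⟨c, hc⟩ := isConj_iff.1 h
  have h1 : ρ b = (ρ c * ρ a) * ρ c⁻¹ := by rw [← hc]; simp [map_mul, mul_assoc]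
  rw [h1, trace_mul_comm, ← map_mul, ← map_mul, inv_mul_cancel_left]

lemma isConj_inv {a b : ↥N} (h : IsConj a b) : IsConj a⁻¹ b⁻¹ := by
  obtain ⟨c, hc⟩ := isConj_iff.1 h
  exact isConj_iff.2 ⟨c, by rw [← hc]; group⟩

lemma trace_conjNormal_add (hreal : ∀ n x : ↥N,
      (IsConj (n : G) (x : G) ∨ IsConj ((n : G))⁻¹ (x : G)) ↔ (IsConj n x ∨ IsConj n⁻¹ x))
    (x : G) (n : ↥N) :
    trace ℝ V (ρ (MulAut.conjNormal x n)) + trace ℝ V (ρ (MulAut.conjNormal x n)⁻¹) =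
      trace ℝ V (ρ n) + trace ℝ V (ρ n⁻¹) := by
  have hconjG : IsConj (n : G) ((MulAut.conjNormal x n : ↥N) : G) := by
    rw [MulAut.conjNormal_apply]
    exact isConj_iff.2 ⟨x, rfl⟩
  rcases (hreal n (MulAut.conjNormal x n)).1 (Or.inl hconjG) with h | h
  · rw [← trace_eq_of_isConj ρ h, ← trace_eq_of_isConj ρ (isConj_inv h)]
  · have h2 := isConj_inv h
    rw [inv_inv] at h2
    rw [← trace_eq_of_isConj ρ h, ← trace_eq_of_isConj ρ h2, add_comm]

/-- Key invariance: conjugating a subgroup of `N` by any element of `G` does not change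
the dimension of the fixed subspace. -/
lemma fixedDim_map_conjNormal (hreal : ∀ n x : ↥N,
      (IsConj (n : G) (x : G) ∨ IsConj ((n : G))⁻¹ (x : G)) ↔ (IsConj n x ∨ IsConj n⁻¹ x))
    (x : G) (M : Subgroup ↥N) :
    fixedDim ρ (M.map (MulAut.conjNormal x).toMonoidHom) = fixedDim ρ M := by
  haveI : Fintype ↥M := Fintype.ofFinite _
  haveI : Fintype ↥(M.map (MulAut.conjNormal x).toMonoidHom) := Fintype.ofFinite _
  have hinj : Function.Injective ((MulAut.conjNormal x).toMonoidHom : ↥N →* ↥N) :=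
    (MulAut.conjNormal x).injective
  set e := M.equivMapOfInjective (MulAut.conjNormal x).toMonoidHom hinj with he
  have hcard : Fintype.card ↥(M.map (MulAut.conjNormal x).toMonoidHom) = Fintype.card ↥M :=
    (Fintype.card_congr e.toEquiv).symm
  have hsum : ∑ m : ↥(M.map (MulAut.conjNormal x).toMonoidHom), trace ℝ V (ρ ↑m) =
      ∑ m : ↥M, trace ℝ V (ρ ↑m) := by
    rw [← Equiv.sum_comp e.toEquiv (fun m => trace ℝ V (ρ ↑m))]
    have hval : ∀ m : ↥M, ((e m : ↥(M.map (MulAut.conjNormal x).toMonoidHom)) : ↥N) =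
        MulAut.conjNormal x ↑m := fun m =>
      Subgroup.coe_equivMapOfInjective_apply M _ hinj m
    have key : ∀ m : ↥M,
        trace ℝ V (ρ (MulAut.conjNormal x ↑m)) + trace ℝ V (ρ ((MulAut.conjNormal x ↑m)⁻¹)) =
        trace ℝ V (ρ ↑m) + trace ℝ V (ρ ((↑m)⁻¹)) := fun m =>
      trace_conjNormal_add ρ hreal x ↑m
    have hinv1 : ∑ m : ↥M, trace ℝ V (ρ ((MulAut.conjNormal x ↑m)⁻¹)) =
        ∑ m : ↥M, trace ℝ V (ρ (MulAut.conjNormal x ↑m)) := by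
      rw [← Equiv.sum_comp (Equiv.inv ↥M) (fun m => trace ℝ V (ρ (MulAut.conjNormal x ↑m)))]
      apply Finset.sum_congr rfl
      intro m _
      simp [Equiv.inv_apply]
    have hinv2 : ∑ m : ↥M, trace ℝ V (ρ ((↑m)⁻¹)) = ∑ m : ↥M, trace ℝ V (ρ ↑m) := by
      rw [← Equiv.sum_comp (Equiv.inv ↥M) (fun m => trace ℝ V (ρ ↑m))]
      apply Finset.sum_congr rfl
      intro m _
      simp [Equiv.inv_apply]
    have hdouble : (2 : ℝ) * ∑ m : ↥M, trace ℝ V (ρ (MulAut.conjNormal x ↑m)) =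
        (2 : ℝ) * ∑ m : ↥M, trace ℝ V (ρ ↑m) := by
      have lhs : (2 : ℝ) * ∑ m : ↥M, trace ℝ V (ρ (MulAut.conjNormal x ↑m)) =
          ∑ m : ↥M, (trace ℝ V (ρ (MulAut.conjNormal x ↑m)) +
            trace ℝ V (ρ ((MulAut.conjNormal x ↑m)⁻¹))) := by
        rw [Finset.sum_add_distrib, hinv1]; ring
      have rhs : (2 : ℝ) * ∑ m : ↥M, trace ℝ V (ρ ↑m) =
          ∑ m : ↥M, (trace ℝ V (ρ ↑m) + trace ℝ V (ρ ((↑m)⁻¹))) := by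
        rw [Finset.sum_add_distrib, hinv2]; ring
      rw [lhs, rhs]
      exact Finset.sum_congr rfl fun m _ => key m
    have := mul_left_cancel₀ (two_ne_zero) hdouble
    calc ∑ m : ↥M, trace ℝ V (ρ ↑(e m)) = ∑ m : ↥M, trace ℝ V (ρ (MulAut.conjNormal x ↑m)) := by
          exact Finset.sum_congr rfl fun m _ => by rw [hval m]
      _ = ∑ m : ↥M, trace ℝ V (ρ ↑m) := this
  have hc1 := fixedDim_cast ρ (M.map (MulAut.conjNormal x).toMonoidHom)
  have hc2 := fixedDim_cast ρ M
  have : (fixedDim ρ (M.map (MulAut.conjNormal x).toMonoidHom) : ℝ) = (fixedDim ρ M : ℝ) := by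
    rw [hc1, hc2, hcard, hsum]
  exact_mod_cast this

/-! ### The Mackey decomposition of the fixed points of the induced representation -/

variable (N) in
/-- For `x : G`, the subgroup of `N` of elements `n` with `x⁻¹ n x ∈ K`. -/
def conjFix (K : Subgroup G) (x : G) : Subgroup ↥N :=
  (K.subgroupOf N).map (MulAut.conjNormal x).toMonoidHom

lemma mem_conjFix {K : Subgroup G} {x : G} {n : ↥N} :
    n ∈ conjFix N K x ↔ x⁻¹ * ↑n * x ∈ K := by
  constructor
  · rintro ⟨m, hm, rfl⟩
    have h1 : (((MulAut.conjNormal x).toMonoidHom m : ↥N) : G) = x * ↑m * x⁻¹ :=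
      MulAut.conjNormal_apply x m
    rw [h1]
    have h2 : x⁻¹ * (x * ↑m * x⁻¹) * x = (m : G) := by group
    rw [h2]
    exact Subgroup.mem_subgroupOf.1 hm
  · intro hn
    have hmem : x⁻¹ * ↑n * x ∈ N := by
      have := Subgroup.Normal.conj_mem ‹N.Normal› ↑n n.2 x⁻¹
      simpa [mul_assoc] using this
    refine ⟨⟨x⁻¹ * ↑n * x, hmem⟩, Subgroup.mem_subgroupOf.2 hn, ?_⟩
    ext
    have h1 : (((MulAut.conjNormal x).toMonoidHom ⟨x⁻¹ * ↑n * x, hmem⟩ : ↥N) : G) =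
        x * (x⁻¹ * ↑n * x) * x⁻¹ := MulAut.conjNormal_apply _ _
    rw [h1]
    group

lemma indRep_fixed_apply {K : Subgroup G} {f : ↥(indCarrier N ρ)}
    (hf : f ∈ fixedSubmodule (indRep N ρ) K) {k : G} (hk : k ∈ K) (y : G) :
    (f : G → V) (y * k) = (f : G → V) y := by
  have h := hf k hk
  have h2 : ((indRep N ρ k f : ↥(indCarrier N ρ)) : G → V) = (f : G → V) :=
    congrArg Subtype.val h
  exact congrFun h2 y

lemma eval_mem_fixed {K : Subgroup G} {f : ↥(indCarrier N ρ)}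
    (hf : f ∈ fixedSubmodule (indRep N ρ) K) (x : G) :
    (f : G → V) x ∈ fixedSubmodule ρ (conjFix N K x) := by
  intro n hn
  rw [mem_conjFix] at hn
  have h1 : (↑n : G) * x = x * (x⁻¹ * ↑n * x) := by group
  calc ρ n ((f : G → V) x) = (f : G → V) (↑n * x) := (f.2 n x).symm
    _ = (f : G → V) (x * (x⁻¹ * ↑n * x)) := by rw [h1]
    _ = (f : G → V) x := indRep_fixed_apply ρ hf hn x

variable (N) in
/-- Evaluation at coset representatives, as a linear map. -/
noncomputable def mackeyMap (K : Subgroup G) :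
    ↥(fixedSubmodule (indRep N ρ) K) →ₗ[ℝ]
      ((q : G ⧸ (N ⊔ K)) → ↥(fixedSubmodule ρ (conjFix N K q.out))) where
  toFun f q := ⟨(f.1 : G → V) q.out, eval_mem_fixed ρ f.2 q.out⟩
  map_add' f g := rfl
  map_smul' c f := rfl

lemma exists_decomp (K : Subgroup G) (y : G) :
    ∃ m : ↥N, ∃ k ∈ K, y = ↑m * ((QuotientGroup.mk y : G ⧸ (N ⊔ K)).out) * k := by
  set x : G := (QuotientGroup.mk y : G ⧸ (N ⊔ K)).out with hx
  have hmem : y⁻¹ * x ∈ N ⊔ K := by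
    rw [← QuotientGroup.eq]
    exact (QuotientGroup.out_eq' (QuotientGroup.mk y : G ⧸ (N ⊔ K))).symm
  rw [← SetLike.mem_coe, Subgroup.normal_mul] at hmem
  obtain ⟨n, hn, k, hk, hnk⟩ := hmem
  have hmemN : x * k⁻¹ * n⁻¹ * k * x⁻¹ ∈ N := by
    have h1 : x * k⁻¹ * n⁻¹ * k * x⁻¹ = (x * k⁻¹) * n⁻¹ * (x * k⁻¹)⁻¹ := by group
    rw [h1]
    exact Subgroup.Normal.conj_mem ‹N.Normal› n⁻¹ (inv_mem hn) (x * k⁻¹)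
  refine ⟨⟨x * k⁻¹ * n⁻¹ * k * x⁻¹, hmemN⟩, k⁻¹, inv_mem hk, ?_⟩
  have hnk' : n * k = y⁻¹ * x := hnk
  have hy : y = x * k⁻¹ * n⁻¹ := by
    have hx2 : y * (n * k) = x := by rw [hnk']; group
    rw [← hx2]; group
  rw [hy]
  simp only [Subgroup.coe_mk]
  group

lemma conjFix_indep {K : Subgroup G} {x : G} {v : V}
    (hv : v ∈ fixedSubmodule ρ (conjFix N K x))
    {m₁ m₂ : ↥N} {k₁ k₂ : G} (h₁ : k₁ ∈ K) (h₂ : k₂ ∈ K)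
    (h : ↑m₁ * x * k₁ = ↑m₂ * x * k₂) : ρ m₁ v = ρ m₂ v := by
  have hmem : m₂⁻¹ * m₁ ∈ conjFix N K x := by
    rw [mem_conjFix]
    have hcoe : ((m₂⁻¹ * m₁ : ↥N) : G) = (↑m₂)⁻¹ * ↑m₁ := rfl
    rw [hcoe]
    have key : x⁻¹ * ((↑m₂)⁻¹ * ↑m₁) * x = k₂ * k₁⁻¹ := by
      have h' : (↑m₂)⁻¹ * (↑m₁ * x * k₁) * k₁⁻¹ = (↑m₂)⁻¹ * (↑m₂ * x * k₂) * k₁⁻¹ := by rw [h]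
      have h'' : (↑m₂ : G)⁻¹ * ↑m₁ * x = x * (k₂ * k₁⁻¹) := by
        calc (↑m₂ : G)⁻¹ * ↑m₁ * x = (↑m₂)⁻¹ * (↑m₁ * x * k₁) * k₁⁻¹ := by group
          _ = (↑m₂)⁻¹ * (↑m₂ * x * k₂) * k₁⁻¹ := h'
          _ = x * (k₂ * k₁⁻¹) := by group
      calc x⁻¹ * ((↑m₂ : G)⁻¹ * ↑m₁) * x = x⁻¹ * ((↑m₂)⁻¹ * ↑m₁ * x) := by group
        _ = x⁻¹ * (x * (k₂ * k₁⁻¹)) := by rw [h'']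
        _ = k₂ * k₁⁻¹ := by group
    rw [key]
    exact mul_mem h₂ (inv_mem h₁)
  have hfix : ρ (m₂⁻¹ * m₁) v = v := hv _ hmem
  calc ρ m₁ v = ρ (m₂ * (m₂⁻¹ * m₁)) v := by rw [mul_inv_cancel_left]
    _ = ρ m₂ (ρ (m₂⁻¹ * m₁) v) := by rw [map_mul]; rfl
    _ = ρ m₂ v := by rw [hfix]

variable (N) in
/-- The inverse construction: a family of fixed vectors glues to an equivariant function. -/
noncomputable def mackeyInv (K : Subgroup G)
    (v : (q : G ⧸ (N ⊔ K)) → ↥(fixedSubmodule ρ (conjFix N K q.out))) : G → V :=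
  fun y => ρ (Classical.choose (exists_decomp (N := N) K y)) (v (QuotientGroup.mk y))

lemma mackeyInv_eq (K : Subgroup G)
    (v : (q : G ⧸ (N ⊔ K)) → ↥(fixedSubmodule ρ (conjFix N K q.out)))
    {y : G} {m : ↥N} {k : G} (hk : k ∈ K)
    (hy : y = ↑m * ((QuotientGroup.mk y : G ⧸ (N ⊔ K)).out) * k) :
    mackeyInv N ρ K v y = ρ m (v (QuotientGroup.mk y)) := by
  obtain ⟨k', hk', hy'⟩ := Classical.choose_spec (exists_decomp (N := N) K y)
  exact conjFix_indep ρ (v (QuotientGroup.mk y)).2 hk' hk (hy'.symm.trans hy)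

lemma mackeyInv_mem_carrier (K : Subgroup G)
    (v : (q : G ⧸ (N ⊔ K)) → ↥(fixedSubmodule ρ (conjFix N K q.out))) :
    mackeyInv N ρ K v ∈ indCarrier N ρ := by
  intro h x
  obtain ⟨m, k, hk, hx⟩ := exists_decomp (N := N) K x
  have hq : (QuotientGroup.mk (↑h * x) : G ⧸ (N ⊔ K)) = QuotientGroup.mk x := by
    rw [QuotientGroup.eq]
    have hmem : (↑h * x)⁻¹ * x = x⁻¹ * (↑h)⁻¹ * x := by group
    rw [hmem]
    exact Subgroup.mem_sup_left
      (by simpa using Subgroup.Normal.conj_mem ‹N.Normal› _ (inv_mem h.2) x⁻¹)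
  have hx2 : ↑h * x = ↑(h * m) * ((QuotientGroup.mk (↑h * x) : G ⧸ (N ⊔ K)).out) * k := by
    rw [hq]
    have hcoe : ((h * m : ↥N) : G) = ↑h * ↑m := rfl
    rw [hcoe]
    calc (↑h : G) * x = ↑h * (↑m * ((QuotientGroup.mk x : G ⧸ (N ⊔ K)).out) * k) := by rw [← hx]
      _ = ↑h * ↑m * ((QuotientGroup.mk x : G ⧸ (N ⊔ K)).out) * k := by group
  rw [mackeyInv_eq ρ K v hk hx2, mackeyInv_eq ρ K v hk hx, hq, map_mul]
  rfl

lemma mackeyInv_fixed (K : Subgroup G)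
    (v : (q : G ⧸ (N ⊔ K)) → ↥(fixedSubmodule ρ (conjFix N K q.out)))
    {k' : G} (hk' : k' ∈ K) (y : G) :
    mackeyInv N ρ K v (y * k') = mackeyInv N ρ K v y := by
  obtain ⟨m, k, hk, hy⟩ := exists_decomp (N := N) K y
  have hq : (QuotientGroup.mk (y * k') : G ⧸ (N ⊔ K)) = QuotientGroup.mk y := by
    rw [QuotientGroup.eq]
    have : (y * k')⁻¹ * y = k'⁻¹ := by group
    rw [this]
    exact Subgroup.mem_sup_right (inv_mem hk')
  have hy2 : y * k' = ↑m * ((QuotientGroup.mk (y * k') : G ⧸ (N ⊔ K)).out) * (k * k') := by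
    rw [hq]
    calc y * k' = (↑m * ((QuotientGroup.mk y : G ⧸ (N ⊔ K)).out) * k) * k' := by rw [← hy]
      _ = ↑m * ((QuotientGroup.mk y : G ⧸ (N ⊔ K)).out) * (k * k') := by group
  rw [mackeyInv_eq ρ K v (mul_mem hk hk') hy2, mackeyInv_eq ρ K v hk hy, hq]

lemma mackeyMap_bijective (K : Subgroup G) : Function.Bijective (mackeyMap N ρ K) := by
  constructor
  · rw [injective_iff_map_eq_zero]
    intro f hf
    ext y
    obtain ⟨m, k, hk, hy⟩ := exists_decomp (N := N) K y
    have h0 : (f.1 : G → V) ((QuotientGroup.mk y : G ⧸ (N ⊔ K)).out) = 0 := by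
      have := congrFun hf (QuotientGroup.mk y)
      exact congrArg Subtype.val this
    have hvy : (f.1 : G → V) y = 0 := by
      rw [hy]
      have hassoc : (↑m : G) * ((QuotientGroup.mk y : G ⧸ (N ⊔ K)).out) * k =
          ↑m * (((QuotientGroup.mk y : G ⧸ (N ⊔ K)).out) * k) := by group
      rw [hassoc, f.1.2 m _, indRep_fixed_apply ρ f.2 hk, h0, map_zero]
    exact hvy
  · intro v
    refine ⟨⟨⟨mackeyInv N ρ K v, mackeyInv_mem_carrier ρ K v⟩, ?_⟩, ?_⟩
    · intro g hg
      apply Subtype.ext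
      funext y
      exact mackeyInv_fixed ρ K v hg y
    · funext q
      apply Subtype.ext
      have hout : (QuotientGroup.mk (q.out : G) : G ⧸ (N ⊔ K)) = q :=
        QuotientGroup.out_eq' q
      have hy : (q.out : G) = ↑(1 : ↥N) * ((QuotientGroup.mk (q.out : G) : G ⧸ (N ⊔ K)).out)
          * (1 : G) := by
        rw [hout]; simp
      have := mackeyInv_eq ρ K v (one_mem K) hy
      calc (mackeyMap N ρ K ⟨⟨mackeyInv N ρ K v, _⟩, _⟩ q : V) = mackeyInv N ρ K v q.out := rfl
        _ = ρ (1 : ↥N) (v (QuotientGroup.mk (q.out : G))) := this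
        _ = (v q : V) := by rw [map_one, hout]; rfl

/-- The Mackey dimension formula for the fixed points of the induced representation. -/
lemma fixedDim_indRep (hreal : ∀ n x : ↥N,
      (IsConj (n : G) (x : G) ∨ IsConj ((n : G))⁻¹ (x : G)) ↔ (IsConj n x ∨ IsConj n⁻¹ x))
    (K : Subgroup G) :
    fixedDim (indRep N ρ) K = (N ⊔ K).index * fixedDim ρ (K.subgroupOf N) := by
  haveI : Fintype (G ⧸ (N ⊔ K)) := Fintype.ofFinite _
  have e := LinearEquiv.ofBijective (mackeyMap N ρ K) (mackeyMap_bijective ρ K)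
  have h1 : fixedDim (indRep N ρ) K =
      Module.finrank ℝ ((q : G ⧸ (N ⊔ K)) → ↥(fixedSubmodule ρ (conjFix N K q.out))) :=
    e.finrank_eq
  rw [h1, Module.finrank_pi_fintype ℝ]
  have h2 : ∀ q : G ⧸ (N ⊔ K),
      Module.finrank ℝ ↥(fixedSubmodule ρ (conjFix N K q.out)) =
        fixedDim ρ (K.subgroupOf N) := fun q =>
    fixedDim_map_conjNormal ρ hreal q.out (K.subgroupOf N)
  rw [Finset.sum_congr rfl (fun q _ => h2 q), Finset.sum_const, Finset.card_univ, smul_eq_mul,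
    Subgroup.index_eq_card, Nat.card_eq_fintype_card]

end Aux

section IndexAux

variable {G : Type} [Group G] [Fintype G]

lemma index_pos' (H : Subgroup G) : 0 < H.index :=
  Nat.pos_of_ne_zero Subgroup.index_ne_zero_of_finite

lemma index_le_of_le' {H H' : Subgroup G} (h : H ≤ H') : H'.index ≤ H.index :=
  Nat.le_of_dvd (index_pos' H) (Subgroup.index_dvd_of_le h)

lemma two_mul_index_le_of_lt {H H' : Subgroup G} (h : H < H') : 2 * H'.index ≤ H.index := by
  rw [← Subgroup.relIndex_mul_index h.le]
  have h0 : H.relIndex H' ≠ 0 := Subgroup.index_ne_zero_of_finite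
  have h1 : H.relIndex H' ≠ 1 := by
    intro hc
    exact h.not_ge (Subgroup.relIndex_eq_one.1 hc)
  have h2 : 2 ≤ H.relIndex H' := by omega
  exact Nat.mul_le_mul_right _ h2

lemma sup_lt_of_subgroupOf_eq {N H H' : Subgroup G} [N.Normal] (h : H < H')
    (heq : H.subgroupOf N = H'.subgroupOf N) : N ⊔ H < N ⊔ H' := by
  refine lt_of_le_of_ne (sup_le_sup_left h.le N) fun hEq => ?_
  have hsub : H' ≤ H := by
    intro x hx
    have hmem : x ∈ N ⊔ H := by
      rw [hEq]
      exact Subgroup.mem_sup_right hx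
    rw [← SetLike.mem_coe, Subgroup.normal_mul] at hmem
    obtain ⟨n, hn, p, hp, hnp⟩ := hmem
    have hnp' : n * p = x := hnp
    have hnH' : n ∈ H' := by
      have hn' : n = x * p⁻¹ := by rw [← hnp']; group
      rw [hn']
      exact mul_mem hx (inv_mem (h.le hp))
    have hmem2 : (⟨n, hn⟩ : ↥N) ∈ H'.subgroupOf N := Subgroup.mem_subgroupOf.2 hnH'
    rw [← heq] at hmem2
    have hnH : n ∈ H := Subgroup.mem_subgroupOf.1 hmem2
    rw [← hnp']
    exact mul_mem hnH hp
  exact lt_irrefl H (lt_of_lt_of_le h hsub)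

end IndexAux

theorem statement14 {G : Type} [Group G] [Fintype G] (N : Subgroup G) [N.Normal]
    (hreal : ∀ n x : ↥N,
      (IsConj (n : G) (x : G) ∨ IsConj ((n : G))⁻¹ (x : G)) ↔ (IsConj n x ∨ IsConj n⁻¹ x))
    {V : Type} [AddCommGroup V] [Module ℝ V] [FiniteDimensional ℝ V]
    (ρ : Representation ℝ ↥N V)
    (h2 : ∀ P K : Subgroup ↥N, IsPrimePowerOrder (Nat.card ↥P) → P < K →
      2 * fixedDim ρ K ≤ fixedDim ρ P)
    (h3 : (∀ P : Subgroup ↥N, IsPrimePowerOrder (Nat.card ↥P) → 5 ≤ fixedDim ρ P) ∧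
      (∀ K : Subgroup ↥N, IsPseudocyclic ↥K → 2 ≤ fixedDim ρ K))
    (h4 : ∀ K K' : Subgroup ↥N, IsPseudocyclic ↥K → K < K' →
      fixedDim ρ K' < fixedDim ρ K) :
    (∀ P K : Subgroup G, IsPrimePowerOrder (Nat.card ↥P) → P < K →
      2 * fixedDim (indRep N ρ) K ≤ fixedDim (indRep N ρ) P) ∧
    ((∀ P : Subgroup G, IsPrimePowerOrder (Nat.card ↥P) → 5 ≤ fixedDim (indRep N ρ) P) ∧
      (∀ K : Subgroup G, IsPseudocyclic ↥K → 2 ≤ fixedDim (indRep N ρ) K)) ∧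
    (∀ K K' : Subgroup G, IsPseudocyclic ↥K → K < K' →
      fixedDim (indRep N ρ) K' < fixedDim (indRep N ρ) K) := by
  have hind : ∀ K : Subgroup G,
      fixedDim (indRep N ρ) K = (N ⊔ K).index * fixedDim ρ (K.subgroupOf N) :=
    fun K => fixedDim_indRep ρ hreal K
  refine ⟨?_, ⟨?_, ?_⟩, ?_⟩
  · -- condition (2)
    intro P K hP hPK
    rw [hind P, hind K]
    have hPP := isPrimePowerOrder_subgroupOf (N := N) hP
    have hle : P.subgroupOf N ≤ K.subgroupOf N := fun x hx => hPK.le hx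
    have hi : (N ⊔ K).index ≤ (N ⊔ P).index :=
      index_le_of_le' (sup_le_sup_left hPK.le N)
    rcases lt_or_eq_of_le hle with hlt | heq
    · have hdim := h2 _ _ hPP hlt
      calc 2 * ((N ⊔ K).index * fixedDim ρ (K.subgroupOf N))
          = (N ⊔ K).index * (2 * fixedDim ρ (K.subgroupOf N)) := by ring
        _ ≤ (N ⊔ K).index * fixedDim ρ (P.subgroupOf N) := Nat.mul_le_mul_left _ hdim
        _ ≤ (N ⊔ P).index * fixedDim ρ (P.subgroupOf N) := Nat.mul_le_mul_right _ hi
    · have hsup := sup_lt_of_subgroupOf_eq hPK heq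
      have h2i := two_mul_index_le_of_lt hsup
      rw [← heq]
      calc 2 * ((N ⊔ K).index * fixedDim ρ (P.subgroupOf N))
          = (2 * (N ⊔ K).index) * fixedDim ρ (P.subgroupOf N) := by ring
        _ ≤ (N ⊔ P).index * fixedDim ρ (P.subgroupOf N) := Nat.mul_le_mul_right _ h2i
  · -- condition (3), first part
    intro P hP
    rw [hind P]
    have h5 := h3.1 _ (isPrimePowerOrder_subgroupOf (N := N) hP)
    calc 5 ≤ fixedDim ρ (P.subgroupOf N) := h5
      _ = 1 * fixedDim ρ (P.subgroupOf N) := (one_mul _).symm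
      _ ≤ (N ⊔ P).index * fixedDim ρ (P.subgroupOf N) :=
          Nat.mul_le_mul_right _ (index_pos' _)
  · -- condition (3), second part
    intro K hK
    rw [hind K]
    have hd := h3.2 _ (isPseudocyclic_subgroupOf (N := N) hK)
    calc 2 ≤ fixedDim ρ (K.subgroupOf N) := hd
      _ = 1 * fixedDim ρ (K.subgroupOf N) := (one_mul _).symm
      _ ≤ (N ⊔ K).index * fixedDim ρ (K.subgroupOf N) :=
          Nat.mul_le_mul_right _ (index_pos' _)
  · -- condition (4)
    intro K K' hK hKK'
    rw [hind K, hind K']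
    have hKN := isPseudocyclic_subgroupOf (N := N) hK
    have hd := h3.2 _ hKN
    have hle : K.subgroupOf N ≤ K'.subgroupOf N := fun x hx => hKK'.le hx
    have hi : (N ⊔ K').index ≤ (N ⊔ K).index :=
      index_le_of_le' (sup_le_sup_left hKK'.le N)
    rcases lt_or_eq_of_le hle with hlt | heq
    · have hdim := h4 _ _ hKN hlt
      calc (N ⊔ K').index * fixedDim ρ (K'.subgroupOf N)
          ≤ (N ⊔ K).index * fixedDim ρ (K'.subgroupOf N) := Nat.mul_le_mul_right _ hi
        _ < (N ⊔ K).index * fixedDim ρ (K.subgroupOf N) :=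
            mul_lt_mul_of_pos_left hdim (index_pos' _)
    · have hsup := sup_lt_of_subgroupOf_eq hKK' heq
      have h2i := two_mul_index_le_of_lt hsup
      have hip := index_pos' (N ⊔ K')
      have hlt' : (N ⊔ K').index < (N ⊔ K).index := by omega
      rw [← heq]
      exact mul_lt_mul_of_pos_right hlt' (by omega)
end

section
/- Let G be a finite group, H a subgroup of G, and let U and V be finite-dimensional real representations of H such that χ_U(h) = χ_V(h) for every h ∈ H whose order is a prime power (including the identity), and such that dim_ℝ U^H = dim_ℝ V^H = 0. Then the induced representations satisfy χ_{Ind_H^G(U)}(g) = χ_{Ind_H^G(V)}(g) for every g ∈ G whose order is a prime power, and dim_ℝ (Ind_H^G(U))^G = dim_ℝ (Ind_H^G(V))^G = 0. -/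
variable {G : Type} [Group G]

namespace Statement18Aux

open QuotientGroup

variable {G : Type} [Group G]

/-- Quotient by right cosets. -/
abbrev RQ (H : Subgroup G) := Quotient (QuotientGroup.rightRel H)

/-- The coset map. -/
def qmk (H : Subgroup G) (x : G) : RQ H := Quotient.mk (QuotientGroup.rightRel H) x

lemma qmk_out (H : Subgroup G) (q : RQ H) : qmk H q.out = q := Quotient.out_eq q

lemma mem_aux (H : Subgroup G) (x : G) : x * (qmk H x).out⁻¹ ∈ H := by
  have h : (QuotientGroup.rightRel H) (qmk H x).out x := Quotient.mk_out (s := rightRel H) x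
  exact (QuotientGroup.rightRel_apply).1 h

/-- For a fixed coset, the conjugating element of `H`. -/
noncomputable def hElem (H : Subgroup G) (g : G) (q : RQ H) : ↥H :=
  ⟨q.out * g * (qmk H (q.out * g)).out⁻¹, mem_aux H (q.out * g)⟩

variable {H : Subgroup G} {V : Type} [AddCommGroup V] [Module ℝ V]

/-- The induced space is isomorphic to functions on coset representatives. -/
noncomputable def equivInd (ρ : Representation ℝ ↥H V) :
    ↥(indCarrier H ρ) ≃ₗ[ℝ] (RQ H → V) where
  toFun f := fun q => f.1 q.out
  map_add' _ _ := rfl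
  map_smul' _ _ := rfl
  invFun φ := ⟨fun x => ρ ⟨x * (qmk H x).out⁻¹, mem_aux H x⟩ (φ (qmk H x)), by
    intro h x
    have h1 : qmk H ((h : G) * x) = qmk H x := by
      apply Quotient.sound
      exact (QuotientGroup.rightRel_apply).mpr (by simpa [mul_assoc] using H.inv_mem h.2)
    have h2 : (⟨(h : G) * x * (qmk H ((h:G) * x)).out⁻¹, mem_aux H ((h : G) * x)⟩ : ↥H)
        = h * ⟨x * (qmk H x).out⁻¹, mem_aux H x⟩ := by
      apply Subtype.ext
      simp [h1, mul_assoc]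
    show ρ (⟨(h : G) * x * (qmk H ((h : G) * x)).out⁻¹, mem_aux H ((h : G) * x)⟩ : ↥H)
        (φ (qmk H ((h : G) * x)))
      = ρ h (ρ (⟨x * (qmk H x).out⁻¹, mem_aux H x⟩ : ↥H) (φ (qmk H x)))
    rw [h2, h1, map_mul]
    rfl⟩
  left_inv f := by
    apply Subtype.ext
    funext x
    have hprop := f.2 ⟨x * (qmk H x).out⁻¹, mem_aux H x⟩ (qmk H x).out
    show ρ (⟨x * (qmk H x).out⁻¹, mem_aux H x⟩ : ↥H) (f.1 (qmk H x).out) = f.1 x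
    rw [← hprop]
    simp [mul_assoc]
  right_inv φ := by
    funext q
    simp only
    have h1 : (⟨q.out * (qmk H q.out).out⁻¹, mem_aux H q.out⟩ : ↥H) = 1 := by
      apply Subtype.ext
      simp [qmk_out]
    rw [h1, map_one]
    simp [qmk_out]

lemma conj_eq (ρ : Representation ℝ ↥H V) (g : G) :
    (equivInd ρ).conj (indRep H ρ g) =
      LinearMap.pi (fun q : RQ H =>
        (ρ (hElem H g q)).comp (LinearMap.proj (qmk H (q.out * g)))) := by
  apply LinearMap.ext
  intro φ
  funext q
  rfl

/-- Trace of a block-permutation operator on a finite product. -/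
lemma trace_permBlock {ι : Type} [Fintype ι] [DecidableEq ι] [FiniteDimensional ℝ V]
    (σ : ι → ι) (B : ι → (V →ₗ[ℝ] V)) :
    LinearMap.trace ℝ (ι → V)
      (LinearMap.pi fun i => (B i).comp (LinearMap.proj (σ i))) =
    ∑ i ∈ Finset.univ.filter (fun i => σ i = i), LinearMap.trace ℝ V (B i) := by
  classical
  set bV := Module.finBasis ℝ V with hbV
  set L : (ι → V) →ₗ[ℝ] (ι → V) :=
    LinearMap.pi fun i => (B i).comp (LinearMap.proj (σ i)) with hL
  rw [LinearMap.trace_eq_matrix_trace ℝ (Pi.basis fun _ : ι => bV) L]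
  rw [Matrix.trace]
  have key : ∀ ja : Σ _ : ι, Fin (Module.finrank ℝ V),
      (LinearMap.toMatrix (Pi.basis fun _ : ι => bV) (Pi.basis fun _ : ι => bV) L).diag ja
        = if σ ja.1 = ja.1 then bV.repr (B ja.1 (bV ja.2)) ja.2 else 0 := by
    rintro ⟨i, a⟩
    rw [Matrix.diag, LinearMap.toMatrix_apply, Pi.basis_apply, Pi.basis_repr]
    have hLval : (L (Pi.single i (bV a))) i
        = B i ((Pi.single i (bV a) : ι → V) (σ i)) := by
      rw [hL, LinearMap.pi_apply, LinearMap.comp_apply, LinearMap.proj_apply]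
    rw [hLval]
    by_cases h : σ i = i
    · rw [if_pos h, h, Pi.single_eq_same]
    · rw [if_neg h, Pi.single_eq_of_ne h, map_zero, map_zero, Finsupp.zero_apply]
  rw [Finset.sum_congr rfl (fun ja _ => key ja)]
  rw [← Finset.univ_sigma_univ, Finset.sum_sigma]
  have step : ∀ i : ι, (∑ a : Fin (Module.finrank ℝ V),
        if σ i = i then (bV.repr (B i (bV a))) a else 0)
      = if σ i = i then LinearMap.trace ℝ V (B i) else 0 := by
    intro i
    by_cases h : σ i = i
    · simp only [h, if_true]
      rw [LinearMap.trace_eq_matrix_trace ℝ bV (B i), Matrix.trace]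
      simp [Matrix.diag, LinearMap.toMatrix_apply]
    · simp [h]
  rw [Finset.sum_congr rfl (fun i _ => step i), Finset.sum_filter]

lemma trace_ind [Fintype G] [Fintype (RQ H)] [DecidableEq (RQ H)]
    [FiniteDimensional ℝ V] (ρ : Representation ℝ ↥H V) (g : G) :
    LinearMap.trace ℝ ↥(indCarrier H ρ) (indRep H ρ g) =
    ∑ q ∈ Finset.univ.filter (fun q : RQ H => qmk H (q.out * g) = q),
      LinearMap.trace ℝ V (ρ (hElem H g q)) := by
  rw [← LinearMap.trace_conj' (indRep H ρ g) (equivInd ρ), conj_eq]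
  exact trace_permBlock (fun q => qmk H (q.out * g)) (fun q => ρ (hElem H g q))

lemma orderOf_hElem (g : G) (q : RQ H) (hq : qmk H (q.out * g) = q) :
    orderOf (hElem H g q) = orderOf g := by
  rw [← orderOf_injective H.subtype H.subtype_injective (hElem H g q)]
  have hcoe : (H.subtype (hElem H g q) : G) = q.out * g * q.out⁻¹ := by
    simp only [Subgroup.coe_subtype, hElem, hq]
  rw [hcoe]
  have : q.out * g * q.out⁻¹ = (MulAut.conj q.out) g := rfl
  rw [this, MulEquiv.orderOf_eq]

lemma fixed_ind_eq_bot [Fintype G] [FiniteDimensional ℝ V] (ρ : Representation ℝ ↥H V)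
    (hρ : fixedDim ρ ⊤ = 0) : fixedSubmodule (indRep H ρ) ⊤ = ⊥ := by
  have hbot : fixedSubmodule ρ ⊤ = ⊥ := Submodule.finrank_eq_zero.1 hρ
  rw [Submodule.eq_bot_iff]
  intro f hf
  have hfix : ∀ gg : G, ∀ x : G, f.1 (x * gg) = f.1 x := by
    intro gg x
    have := hf gg (Subgroup.mem_top gg)
    exact congrFun (congrArg Subtype.val this) x
  have hone : f.1 1 ∈ fixedSubmodule ρ ⊤ := by
    intro h _
    have := f.2 h 1
    rw [mul_one] at this
    rw [← this]
    have := hfix (h : G) 1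
    rw [one_mul] at this
    rw [this]
  rw [hbot, Submodule.mem_bot] at hone
  apply Subtype.ext
  funext x
  have h3 := hfix x 1
  rw [one_mul] at h3
  rw [h3]
  exact hone

end Statement18Aux

theorem statement18 {G : Type} [Group G] [Fintype G] (H : Subgroup G)
    {U V : Type} [AddCommGroup U] [Module ℝ U] [FiniteDimensional ℝ U]
    [AddCommGroup V] [Module ℝ V] [FiniteDimensional ℝ V]
    (ρU : Representation ℝ ↥H U) (ρV : Representation ℝ ↥H V)
    (hchar : ∀ h : ↥H, IsPrimePowerOrder (orderOf h) →
      LinearMap.trace ℝ U (ρU h) = LinearMap.trace ℝ V (ρV h))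
    (hU : fixedDim ρU ⊤ = 0) (hV : fixedDim ρV ⊤ = 0) :
    (∀ g : G, IsPrimePowerOrder (orderOf g) →
      LinearMap.trace ℝ ↥(indCarrier H ρU) (indRep H ρU g) =
        LinearMap.trace ℝ ↥(indCarrier H ρV) (indRep H ρV g)) ∧
    fixedDim (indRep H ρU) ⊤ = 0 ∧ fixedDim (indRep H ρV) ⊤ = 0 := by
  classical
  haveI : Fintype (Statement18Aux.RQ H) := Fintype.ofFinite _
  haveI : DecidableEq (Statement18Aux.RQ H) := Classical.decEq _
  constructor
  · intro g hg
    rw [Statement18Aux.trace_ind ρU g, Statement18Aux.trace_ind ρV g]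
    apply Finset.sum_congr rfl
    intro q hq
    have hq' : Statement18Aux.qmk H (q.out * g) = q := (Finset.mem_filter.1 hq).2
    apply hchar
    rw [Statement18Aux.orderOf_hElem g q hq']
    exact hg
  · constructor
    · unfold fixedDim
      rw [Statement18Aux.fixed_ind_eq_bot ρU hU]
      exact finrank_bot ℝ _
    · unfold fixedDim
      rw [Statement18Aux.fixed_ind_eq_bot ρV hV]
      exact finrank_bot ℝ _
end

section
/- Let G be a finite group and H a subgroup of G. If H is an Oliver group, then G is an Oliver group. -/
/-- A finite group `G` is an Oliver group if there is no chain `P ⊴ H ⊴ G` with `P` and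
`G/H` of prime power order and `H/P` cyclic. -/
def IsOliverGroup (G : Type) [Group G] : Prop :=
  ¬ ∃ (P H : Subgroup G) (_ : P ≤ H) (hPH : (P.subgroupOf H).Normal), H.Normal ∧
      IsPrimePowerOrder (Nat.card ↥P) ∧ IsPrimePowerOrder H.index ∧
      (haveI := hPH; IsCyclic (↥H ⧸ P.subgroupOf H))

theorem statement19 {G : Type} [Group G] [Finite G] (H : Subgroup G)
    (hH : IsOliverGroup ↥H) : IsOliverGroup G := by
  rintro ⟨P, K, hPK, hPKnorm, hKnorm, ⟨p, k, hp, hcard⟩, hidx, hcyc⟩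
  apply hH
  refine ⟨P.subgroupOf H, K.subgroupOf H, fun x hx => hPK hx, ?_, ?_, ?_, ?_, ?_⟩
  · -- normality of (P.subgroupOf H).subgroupOf (K.subgroupOf H)
    constructor
    intro n hn g
    have hnP : ((n : ↥H) : G) ∈ P := hn
    have hnK : ((n : ↥H) : G) ∈ K := hPK hnP
    have hgK : ((g : ↥H) : G) ∈ K := g.2
    have := hPKnorm.conj_mem ⟨(n : ↥H), hnK⟩ hnP ⟨(g : ↥H), hgK⟩
    simpa [Subgroup.mem_subgroupOf] using this
  · exact hKnorm.subgroupOf H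
  · -- card of P ∩ H is a prime power
    have hdvd : Nat.card ↥(P.subgroupOf H) ∣ Nat.card ↥P := by
      have h1 : P.subgroupOf H = (P ⊓ H).subgroupOf H := by
        rw [Subgroup.inf_subgroupOf_right]
      have e := Subgroup.subgroupOfEquivOfLe (inf_le_right : P ⊓ H ≤ H)
      rw [h1, Nat.card_congr e.toEquiv]
      exact Subgroup.card_dvd_of_le inf_le_left
    rw [hcard] at hdvd
    obtain ⟨j, _, hj⟩ := (Nat.dvd_prime_pow hp).mp hdvd
    exact ⟨p, j, hp, hj⟩
  · -- index divides K.index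
    obtain ⟨q, m, hq, hm⟩ := hidx
    have : (K.subgroupOf H).index ∣ K.index := by
      haveI := hKnorm
      exact Subgroup.relIndex_dvd_index_of_normal K H
    rw [hm] at this
    obtain ⟨j, _, hj⟩ := (Nat.dvd_prime_pow hq).mp this
    exact ⟨q, j, hq, hj⟩
  · -- cyclicity
    haveI := hPKnorm
    haveI := hcyc
    let φ : ↥(K.subgroupOf H) →* ↥K :=
      { toFun := fun x => ⟨((x : ↥H) : G), x.2⟩
        map_one' := rfl
        map_mul' := fun _ _ => rfl }
    let ψ : ↥(K.subgroupOf H) →* ↥K ⧸ P.subgroupOf K :=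
      (QuotientGroup.mk' (P.subgroupOf K)).comp φ
    have hker : (P.subgroupOf H).subgroupOf (K.subgroupOf H) = ψ.ker := by
      ext x
      simp [ψ, φ, MonoidHom.mem_ker, QuotientGroup.eq_one_iff, Subgroup.mem_subgroupOf]
    haveI : ((P.subgroupOf H).subgroupOf (K.subgroupOf H)).Normal := by
      rw [hker]; exact MonoidHom.normal_ker ψ
    exact isCyclic_of_surjective _
      (((QuotientGroup.quotientMulEquivOfEq hker).trans
        (QuotientGroup.quotientKerEquivRange ψ)).symm.surjective)
end
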